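/- arXiv:2108.00025 — 3 statements merged into one kernel-verified Lean document; each statement's English description precedes it below -/
import Mathlib

section
/- Let A and A' be unital C*-algebras, P₁ a nontrivial symmetric projection in A, P₂ = I_A − P₁, A_{jk} = P_j A P_k, and suppose A satisfies (♠): for j ∈ {1,2}, P_j A X = {0} implies X = 0. Fix an integer n ≥ 2 and let φ: A → A' be a bijective map with φ(I_A) = I_{A'}, φ(λA) = λφ(A) for all λ ∈ ℂ, satisfying (•): φ(p_{n*}(A,B,Ξ,…,Ξ)) = p_{n*}(φ(A),φ(B),φ(Ξ),…,φ(Ξ)) for all A, B ∈ A and Ξ ∈ {P₁, P₂, I_A}. Then for j ≠ k in {1,2}, any A_{jj} ∈ A_{jj} and B_{jk} ∈ A_{jk} satisfy φ(A_{jj} B_{jk}) = φ(A_{jj})φ(B_{jk}). -/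
set_option maxHeartbeats 1000000
set_option linter.unusedVariables false
set_option linter.unusedSectionVars false

/-- The `*`-Lie product `[x,y]_* = xy - y x*`. -/
def starLie {R : Type*} [Ring R] [StarRing R] (x y : R) : R := x * y - y * star x

/-- `pn n a b xi = p_{n*}(a, b, xi, ..., xi)` (with `n - 2` trailing copies of `xi`). -/
def pn {R : Type*} [Ring R] [StarRing R] (n : ℕ) (a b ξ : R) : R :=
  (fun z => starLie z ξ)^[n - 2] (starLie a b)


section Generic
variable {R : Type*} [Ring R] [StarRing R]

lemma starLie_add_left (x y ξ : R) : starLie (x + y) ξ = starLie x ξ + starLie y ξ := by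
  simp only [starLie, add_mul, star_add, mul_add]; abel

lemma starLie_add_right (a x y : R) : starLie a (x + y) = starLie a x + starLie a y := by
  simp only [starLie, mul_add, add_mul]; abel

lemma starLie_zero_left (ξ : R) : starLie 0 ξ = 0 := by simp [starLie]

lemma iter_add (ξ : R) (r : ℕ) (z w : R) :
    (fun z => starLie z ξ)^[r] (z + w)
      = (fun z => starLie z ξ)^[r] z + (fun z => starLie z ξ)^[r] w := by
  induction r generalizing z w with
  | zero => simp
  | succ r ih =>
    rw [Function.iterate_succ_apply, Function.iterate_succ_apply, Function.iterate_succ_apply]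
    show (fun z => starLie z ξ)^[r] (starLie (z + w) ξ) = _
    rw [starLie_add_left]
    exact ih _ _

lemma iter_zero (ξ : R) (r : ℕ) : (fun z => starLie z ξ)^[r] 0 = 0 := by
  induction r with
  | zero => simp
  | succ r ih =>
    rw [Function.iterate_succ_apply]
    show (fun z => starLie z ξ)^[r] (starLie 0 ξ) = 0
    rw [starLie_zero_left]; exact ih

lemma pn_sub_eq (k : ℕ) (a b ξ : R) :
    pn (k+3) a b ξ = (fun z => starLie z ξ)^[k+1] (starLie a b) := rfl

lemma pn_add_left (n : ℕ) (a a' b ξ : R) :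
    pn n (a + a') b ξ = pn n a b ξ + pn n a' b ξ := by
  unfold pn
  rw [show starLie (a + a') b = starLie a b + starLie a' b from by
    simp only [starLie, add_mul, star_add, mul_add]; abel]
  exact iter_add ..

lemma pn_add_right (n : ℕ) (a b b' ξ : R) :
    pn n a (b + b') ξ = pn n a b ξ + pn n a b' ξ := by
  unfold pn
  rw [starLie_add_right]
  exact iter_add ..

lemma step_formula (ξ c e : R)
    (hc : c * ξ = c) (hc2 : ξ * c = c) (hcs : star c * ξ = star c) (hcs2 : ξ * star c = star c)
    (he : e * ξ = e) (he2 : ξ * e = 0) (hes : star e * ξ = 0) (hes2 : ξ * star e = star e)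
    (r : ℕ) :
    starLie ((2^r : ℕ) • (c - star c) + (e - star e)) ξ
      = (2^(r+1) : ℕ) • (c - star c) + (e - star e) := by
  rw [pow_succ, mul_comm, mul_smul, two_smul]
  simp only [starLie, star_add, star_sub, star_nsmul, star_star, add_mul, sub_mul, mul_add,
    mul_sub, smul_mul_assoc, mul_smul_comm, smul_sub]
  rw [hc, hc2, hcs, hcs2, he, he2, hes, hes2]
  abel

lemma iterF (ξ : R) (h1 : ξ * ξ = ξ) (h2 : star ξ = ξ) (r : ℕ) (z : R) :
    (fun w => starLie w ξ)^[r+1] z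
      = (2^r : ℕ) • ((ξ*z*ξ) - star (ξ*z*ξ)) + ((z*ξ - ξ*z*ξ) - star (z*ξ - ξ*z*ξ)) := by
  have hstarc : star (ξ*z*ξ) = ξ * star z * ξ := by
    simp [star_mul, h2, mul_assoc]
  have hc : (ξ*z*ξ) * ξ = ξ*z*ξ := by rw [mul_assoc, h1]
  have hc2 : ξ * (ξ*z*ξ) = ξ*z*ξ := by rw [← mul_assoc, ← mul_assoc, h1]
  have hcs : star (ξ*z*ξ) * ξ = star (ξ*z*ξ) := by rw [hstarc, mul_assoc, h1]
  have hcs2 : ξ * star (ξ*z*ξ) = star (ξ*z*ξ) := by rw [hstarc, ← mul_assoc, ← mul_assoc, h1]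
  have he : (z*ξ - ξ*z*ξ) * ξ = z*ξ - ξ*z*ξ := by rw [sub_mul, mul_assoc, h1, hc]
  have he2 : ξ * (z*ξ - ξ*z*ξ) = 0 := by rw [mul_sub, hc2, mul_assoc]; exact sub_self _
  have hes : star (z*ξ - ξ*z*ξ) * ξ = 0 := by
    rw [← h2, ← star_mul, h2, he2, star_zero]
  have hes2 : ξ * star (z*ξ - ξ*z*ξ) = star (z*ξ - ξ*z*ξ) := by
    rw [← h2, ← star_mul, h2, he]
  induction r with
  | zero =>
    rw [Function.iterate_one]
    simp only [pow_zero, one_smul, starLie, star_sub, hstarc, star_mul, h2]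
    abel
  | succ r ih =>
    rw [Function.iterate_succ_apply']
    rw [ih]
    exact step_formula ξ (ξ*z*ξ) (z*ξ - ξ*z*ξ) hc hc2 hcs hcs2 he he2 hes hes2 r

-- ###### projection-based value lemmas ######

variable (P Q : R)

lemma elim0 (e f X : R) (hef : e * f = 0) (hes : star e = e) (hfs : star f = f)
    (hX : e * X * f = X) (hs : star X = X) : X = 0 := by
  have h2 : X = f * (X * e) := by
    conv_lhs => rw [← hs, ← hX]
    simp [star_mul, hes, hfs, hs, mul_assoc]
  calc X = e * X * f := hX.symm
    _ = e * (f * (X * e)) * f := by rw [← h2]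
    _ = 0 := by rw [show e * (f * (X * e)) = (e * f) * (X * e) from by rw [mul_assoc], hef,
        zero_mul, zero_mul]

section Vals
variable (hP2 : P*P = P) (hPs : star P = P) (hPQ : P + Q = 1) (k : ℕ)

include hP2 hPs hPQ

lemma val_a (d : R) : pn (k+3) P d P = star (Q*d*P) - Q*d*P := by
  have hQ : Q = 1 - P := by rw [← hPQ]; abel
  subst hQ
  have hP2' : ∀ x : R, P*(P*x) = P*x := fun x => by rw [← mul_assoc, hP2]
  rw [pn_sub_eq, iterF P hP2 hPs]
  simp only [starLie, hPs, star_sub, star_mul, star_one, mul_sub, sub_mul, mul_assoc, hP2, hP2',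
    one_mul, mul_one, smul_sub, smul_add]
  abel

lemma val_b (d : R) : pn (k+3) P d Q = P*d*Q - star (P*d*Q) := by
  have hQ : Q = 1 - P := by rw [← hPQ]; abel
  subst hQ
  have hQ2 : (1-P)*(1-P) = (1-P) := by
    simp only [mul_sub, sub_mul, one_mul, mul_one, hP2]; abel
  have hQs : star (1-P : R) = 1-P := by rw [star_sub, star_one, hPs]
  have hP2' : ∀ x : R, P*(P*x) = P*x := fun x => by rw [← mul_assoc, hP2]
  rw [pn_sub_eq, iterF _ hQ2 hQs]
  simp only [starLie, hPs, star_sub, star_mul, star_one, mul_sub, sub_mul, mul_assoc, hP2, hP2',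
    one_mul, mul_one, smul_sub, smul_add]
  abel

lemma val_c (z d : R) :
    pn (k+3) (P*z*Q) d Q = P*z*(Q*d*Q) - star (P*z*(Q*d*Q)) := by
  have hQ : Q = 1 - P := by rw [← hPQ]; abel
  subst hQ
  have hQ2 : (1-P)*(1-P) = (1-P) := by
    simp only [mul_sub, sub_mul, one_mul, mul_one, hP2]; abel
  have hQs : star (1-P : R) = 1-P := by rw [star_sub, star_one, hPs]
  have hP2' : ∀ x : R, P*(P*x) = P*x := fun x => by rw [← mul_assoc, hP2]
  rw [pn_sub_eq, iterF _ hQ2 hQs]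
  simp only [starLie, hPs, star_sub, star_mul, star_one, star_star, mul_sub, sub_mul, mul_add,
    add_mul, mul_assoc, hP2, hP2', one_mul, mul_one, smul_sub, smul_add]
  abel

lemma val_g (y : R) : pn (k+3) (P*y*Q) Q Q = P*y*Q - star (P*y*Q) := by
  have hQ : Q = 1 - P := by rw [← hPQ]; abel
  subst hQ
  have hQ2 : (1-P)*(1-P) = (1-P) := by
    simp only [mul_sub, sub_mul, one_mul, mul_one, hP2]; abel
  have hQs : star (1-P : R) = 1-P := by rw [star_sub, star_one, hPs]
  have hP2' : ∀ x : R, P*(P*x) = P*x := fun x => by rw [← mul_assoc, hP2]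
  rw [pn_sub_eq, iterF _ hQ2 hQs]
  simp only [starLie, hPs, star_sub, star_mul, star_one, star_star, mul_sub, sub_mul, mul_add,
    add_mul, mul_assoc, hP2, hP2', one_mul, mul_one, smul_sub, smul_add]
  abel

lemma val_h (x y : R) : pn (k+3) (P*y*Q) (P*x*Q) Q = 0 := by
  have hQ : Q = 1 - P := by rw [← hPQ]; abel
  subst hQ
  have hQ2 : (1-P)*(1-P) = (1-P) := by
    simp only [mul_sub, sub_mul, one_mul, mul_one, hP2]; abel
  have hQs : star (1-P : R) = 1-P := by rw [star_sub, star_one, hPs]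
  have hP2' : ∀ x : R, P*(P*x) = P*x := fun x => by rw [← mul_assoc, hP2]
  rw [pn_sub_eq, iterF _ hQ2 hQs]
  simp only [starLie, hPs, star_sub, star_mul, star_one, star_star, mul_sub, sub_mul, mul_add,
    add_mul, mul_assoc, hP2, hP2', one_mul, mul_one, smul_sub, smul_add]
  abel

lemma val_PQ : pn (k+3) P Q Q = 0 := by
  have hQ : Q = 1 - P := by rw [← hPQ]; abel
  subst hQ
  rw [pn_sub_eq]
  rw [show starLie P (1-P) = 0 from by
    simp only [starLie, hPs, mul_sub, sub_mul, mul_one, one_mul, hP2]; abel]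
  exact iter_zero _ _

lemma val_stepA (x y : R) :
    pn (k+3) (P + P*y*Q) (P*x*Q + Q) Q
      = (P*x*Q + P*y*Q) - star (P*x*Q + P*y*Q) := by
  have hQ : Q = 1 - P := by rw [← hPQ]; abel
  subst hQ
  have hQ2 : (1-P)*(1-P) = (1-P) := by
    simp only [mul_sub, sub_mul, one_mul, mul_one, hP2]; abel
  have hQs : star (1-P : R) = 1-P := by rw [star_sub, star_one, hPs]
  have hP2' : ∀ x : R, P*(P*x) = P*x := fun x => by rw [← mul_assoc, hP2]
  rw [pn_sub_eq, iterF _ hQ2 hQs]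
  simp only [starLie, hPs, star_sub, star_add, star_mul, star_one, star_star, mul_sub, sub_mul,
    mul_add, add_mul, mul_assoc, hP2, hP2', one_mul, mul_one, smul_sub, smul_add]
  abel

end Vals

lemma val_one (k : ℕ) (x y : R) :
    pn (k+3) x y 1 = (2^k : ℕ) • (starLie x y - star (starLie x y)) := by
  rw [pn_sub_eq, iterF 1 (one_mul 1) (star_one R)]
  simp only [one_mul, mul_one, sub_self, star_zero, sub_zero, add_zero]


lemma hQ2_of (hP2 : P*P = P) (hPQ : P + Q = 1) : Q*Q = Q := by
  have hQ : Q = 1 - P := by rw [← hPQ]; abel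
  subst hQ
  simp only [mul_sub, sub_mul, one_mul, mul_one, hP2]; abel

lemma hQs_of (hPs : star P = P) (hPQ : P + Q = 1) : star Q = Q := by
  have hQ : Q = 1 - P := by rw [← hPQ]; abel
  subst hQ
  rw [star_sub, star_one, hPs]

lemma hPQ0_of (hP2 : P*P = P) (hPQ : P + Q = 1) : P*Q = 0 := by
  have hQ : Q = 1 - P := by rw [← hPQ]; abel
  subst hQ
  simp only [mul_sub, mul_one, hP2]; abel

lemma hQP0_of (hP2 : P*P = P) (hPQ : P + Q = 1) : Q*P = 0 := by
  have hQ : Q = 1 - P := by rw [← hPQ]; abel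
  subst hQ
  simp only [sub_mul, one_mul, hP2]; abel

lemma eqOfComps (hPQ : P + Q = 1) (s r : R) (h11 : P*s*P = P*r*P) (h12 : P*s*Q = P*r*Q)
    (h21 : Q*s*P = Q*r*P) (h22 : Q*s*Q = Q*r*Q) : s = r := by
  have h : (P+Q)*s*(P+Q) = (P+Q)*r*(P+Q) := by
    simp only [add_mul, mul_add, h11, h12, h21, h22]
  rwa [hPQ, one_mul, one_mul, mul_one, mul_one] at h

lemma comp21_of (hP2 : P*P = P) (hPs : star P = P) (hPQ : P + Q = 1) (k : ℕ) (t r : R)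
    (h : pn (k+3) P t P = pn (k+3) P r P) : Q*t*P = Q*r*P := by
  have hQs : star Q = Q := hQs_of P Q hPs hPQ
  have hQP0 : Q*P = 0 := hQP0_of P Q hP2 hPQ
  have hQ2 : Q*Q = Q := hQ2_of P Q hP2 hPQ
  have hQ2' : ∀ w : R, Q*(Q*w) = Q*w := fun w => by rw [← mul_assoc, hQ2]
  rw [val_a P Q hP2 hPs hPQ k, val_a P Q hP2 hPs hPQ k] at h
  have h2 : star (Q*t*P) - star (Q*r*P) = Q*t*P - Q*r*P := sub_eq_sub_iff_sub_eq_sub.mp h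
  have hD : star (Q*t*P - Q*r*P) = Q*t*P - Q*r*P := by rw [star_sub]; exact h2
  have hshape : Q*(Q*t*P - Q*r*P)*P = Q*t*P - Q*r*P := by
    simp only [mul_sub, sub_mul, mul_assoc, hP2, hQ2']
  have h0 := elim0 Q P (Q*t*P - Q*r*P) hQP0 hQs hPs hshape hD
  exact sub_eq_zero.mp h0

lemma comp12_of (hP2 : P*P = P) (hPs : star P = P) (hPQ : P + Q = 1) (k : ℕ) (t r : R)
    (h : pn (k+3) P t Q = pn (k+3) P r Q) : P*t*Q = P*r*Q := by
  have hQs : star Q = Q := hQs_of P Q hPs hPQ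
  have hPQ0 : P*Q = 0 := hPQ0_of P Q hP2 hPQ
  have hQ2 : Q*Q = Q := hQ2_of P Q hP2 hPQ
  have hP2' : ∀ w : R, P*(P*w) = P*w := fun w => by rw [← mul_assoc, hP2]
  rw [val_b P Q hP2 hPs hPQ k, val_b P Q hP2 hPs hPQ k] at h
  have h2 : P*t*Q - P*r*Q = star (P*t*Q) - star (P*r*Q) := sub_eq_sub_iff_sub_eq_sub.mp h
  have hD : star (P*t*Q - P*r*Q) = P*t*Q - P*r*Q := by rw [star_sub]; exact h2.symm
  have hshape : P*(P*t*Q - P*r*Q)*Q = P*t*Q - P*r*Q := by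
    simp only [mul_sub, sub_mul, mul_assoc, hQ2, hP2']
  have h0 := elim0 P Q (P*t*Q - P*r*Q) hPQ0 hPs hQs hshape hD
  exact sub_eq_zero.mp h0

lemma comp22_of (hP2 : P*P = P) (hPs : star P = P) (hPQ : P + Q = 1)
    (hsP : ∀ X : R, (∀ Y : R, P*Y*X = 0) → X = 0) (k : ℕ) (t r : R)
    (h : ∀ z, pn (k+3) (P*z*Q) t Q = pn (k+3) (P*z*Q) r Q) : Q*t*Q = Q*r*Q := by
  have hQs : star Q = Q := hQs_of P Q hPs hPQ
  have hPQ0 : P*Q = 0 := hPQ0_of P Q hP2 hPQ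
  have hQ2 : Q*Q = Q := hQ2_of P Q hP2 hPQ
  have hP2' : ∀ w : R, P*(P*w) = P*w := fun w => by rw [← mul_assoc, hP2]
  have key : ∀ z, P*z*(Q*t*Q - Q*r*Q) = 0 := by
    intro z
    have hz := h z
    rw [val_c P Q hP2 hPs hPQ k, val_c P Q hP2 hPs hPQ k] at hz
    have h2 : P*z*(Q*t*Q) - P*z*(Q*r*Q) = star (P*z*(Q*t*Q)) - star (P*z*(Q*r*Q)) :=
      sub_eq_sub_iff_sub_eq_sub.mp hz
    have hE : P*z*(Q*t*Q - Q*r*Q) = P*z*(Q*t*Q) - P*z*(Q*r*Q) := by rw [mul_sub]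
    have hsE : star (P*z*(Q*t*Q - Q*r*Q)) = P*z*(Q*t*Q - Q*r*Q) := by
      rw [hE, star_sub, ← h2]
    have hshape : P*(P*z*(Q*t*Q - Q*r*Q))*Q = P*z*(Q*t*Q - Q*r*Q) := by
      simp only [mul_sub, sub_mul, mul_assoc, hQ2, hP2']
    have h0 := elim0 P Q (P*z*(Q*t*Q - Q*r*Q)) hPQ0 hPs hQs hshape hsE
    rw [hE] at h0 ⊢
    exact h0
  have h0 := hsP (Q*t*Q - Q*r*Q) (fun Y => key Y)
  exact sub_eq_zero.mp h0

end Generic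

section Claims
variable {A A' : Type*} [Ring A] [StarRing A] [Ring A'] [StarRing A']
variable (P Q : A) (φ : A → A') (k : ℕ)

lemma merge2 (hinj : Function.Injective φ)
    (hb : ∀ a b : A, ∀ Ξ ∈ ({P, Q, 1} : Set A), φ (pn (k+3) a b Ξ) = pn (k+3) (φ a) (φ b) (φ Ξ))
    {Ξ : A} (hΞ : Ξ ∈ ({P, Q, 1} : Set A)) {z a b t X : A}
    (ht : φ t = φ a + φ b)
    (hX : φ (pn (k+3) z a Ξ) + φ (pn (k+3) z b Ξ) = φ X) :
    pn (k+3) z t Ξ = X := by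
  apply hinj
  rw [hb z t Ξ hΞ, ht, pn_add_right, ← hb z a Ξ hΞ, ← hb z b Ξ hΞ]
  exact hX

lemma merge2_4 (hinj : Function.Injective φ)
    (hb : ∀ a b : A, ∀ Ξ ∈ ({P, Q, 1} : Set A), φ (pn (k+3) a b Ξ) = pn (k+3) (φ a) (φ b) (φ Ξ))
    {Ξ : A} (hΞ : Ξ ∈ ({P, Q, 1} : Set A)) {z a1 a2 a3 a4 t X : A}
    (ht : φ t = φ a1 + φ a2 + φ a3 + φ a4)
    (hX : φ (pn (k+3) z a1 Ξ) + φ (pn (k+3) z a2 Ξ) + φ (pn (k+3) z a3 Ξ) + φ (pn (k+3) z a4 Ξ)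
      = φ X) :
    pn (k+3) z t Ξ = X := by
  apply hinj
  rw [hb z t Ξ hΞ, ht, pn_add_right, pn_add_right, pn_add_right,
    ← hb z a1 Ξ hΞ, ← hb z a2 Ξ hΞ, ← hb z a3 Ξ hΞ, ← hb z a4 Ξ hΞ]
  exact hX

lemma hb_swap
    (hb : ∀ a b : A, ∀ Ξ ∈ ({P, Q, 1} : Set A), φ (pn (k+3) a b Ξ) = pn (k+3) (φ a) (φ b) (φ Ξ)) :
    ∀ a b : A, ∀ Ξ ∈ ({Q, P, 1} : Set A), φ (pn (k+3) a b Ξ) = pn (k+3) (φ a) (φ b) (φ Ξ) := by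
  intro a b Ξ hΞ
  apply hb
  simp only [Set.mem_insert_iff, Set.mem_singleton_iff] at hΞ ⊢
  tauto

lemma addD1 (hP2 : P*P = P) (hPs : star P = P) (hPQ : P + Q = 1)
    (hsP : ∀ X : A, (∀ Y : A, P*Y*X = 0) → X = 0)
    (hsQ : ∀ X : A, (∀ Y : A, Q*Y*X = 0) → X = 0)
    (hinj : Function.Injective φ) (hsur : Function.Surjective φ) (hz0 : φ 0 = 0)
    (hb : ∀ a b : A, ∀ Ξ ∈ ({P, Q, 1} : Set A), φ (pn (k+3) a b Ξ) = pn (k+3) (φ a) (φ b) (φ Ξ))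
    (x y : A) :
    φ (P*x*P + P*y*Q) = φ (P*x*P) + φ (P*y*Q) := by
  have hQ2 : Q*Q = Q := hQ2_of P Q hP2 hPQ
  have hQs : star Q = Q := hQs_of P Q hPs hPQ
  have hPQ0 : P*Q = 0 := hPQ0_of P Q hP2 hPQ
  have hQP0 : Q*P = 0 := hQP0_of P Q hP2 hPQ
  have hP2' : ∀ w : A, P*(P*w) = P*w := fun w => by rw [← mul_assoc, hP2]
  have hQ2' : ∀ w : A, Q*(Q*w) = Q*w := fun w => by rw [← mul_assoc, hQ2]
  have hPQ0' : ∀ w : A, P*(Q*w) = 0 := fun w => by rw [← mul_assoc, hPQ0, zero_mul]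
  have hQP0' : ∀ w : A, Q*(P*w) = 0 := fun w => by rw [← mul_assoc, hQP0, zero_mul]
  have hPmem : P ∈ ({P, Q, 1} : Set A) := by simp
  have hQmem : Q ∈ ({P, Q, 1} : Set A) := by simp
  obtain ⟨t, ht⟩ := hsur (φ (P*x*P) + φ (P*y*Q))
  suffices hts : t = P*x*P + P*y*Q by rw [← hts, ht]
  have vaP : pn (k+3) P (P*x*P) P = 0 := by
    rw [val_a P Q hP2 hPs hPQ k]
    rw [show Q*(P*x*P)*P = 0 from by
      simp only [mul_assoc, hP2, hQP0', hQP0, zero_mul, mul_zero]]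
    simp
  have vaQ : pn (k+3) P (P*x*P) Q = 0 := by
    rw [val_b P Q hP2 hPs hPQ k]
    rw [show P*(P*x*P)*Q = 0 from by
      simp only [mul_assoc, hP2, hPQ0, hP2', mul_zero, zero_mul]]
    simp
  have vaC : ∀ z, pn (k+3) (P*z*Q) (P*x*P) Q = 0 := by
    intro z
    rw [val_c P Q hP2 hPs hPQ k]
    rw [show P*z*(Q*(P*x*P)*Q) = 0 from by
      simp only [mul_assoc, hQP0', hQP0, zero_mul, mul_zero]]
    simp
  have vbC : ∀ z, pn (k+3) (Q*z*P) (P*y*Q) P = 0 := by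
    intro z
    rw [val_c Q P hQ2 hQs (by rw [add_comm]; exact hPQ) k]
    rw [show Q*z*(P*(P*y*Q)*P) = 0 from by
      simp only [mul_assoc, hP2', hP2, hQP0, mul_zero, zero_mul]]
    simp
  have c21 : Q*t*P = Q*(P*x*P + P*y*Q)*P := by
    apply comp21_of P Q hP2 hPs hPQ k
    apply merge2 P Q φ k hinj hb hPmem ht
    simp only [pn_add_right, vaP, hz0, zero_add]
  have c12 : P*t*Q = P*(P*x*P + P*y*Q)*Q := by
    apply comp12_of P Q hP2 hPs hPQ k
    apply merge2 P Q φ k hinj hb hQmem ht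
    simp only [pn_add_right, vaQ, hz0, zero_add]
  have c22 : Q*t*Q = Q*(P*x*P + P*y*Q)*Q := by
    apply comp22_of P Q hP2 hPs hPQ hsP k
    intro z
    apply merge2 P Q φ k hinj hb hQmem ht
    simp only [pn_add_right, vaC z, hz0, zero_add]
  have c11 : P*t*P = P*(P*x*P + P*y*Q)*P := by
    apply comp22_of Q P hQ2 hQs (by rw [add_comm]; exact hPQ) hsQ k
    intro z
    apply merge2 P Q φ k hinj hb hPmem ht
    simp only [pn_add_right, vbC z, hz0, add_zero]
  exact eqOfComps P Q hPQ _ _ c11 c12 c21 c22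


lemma addD2 (hP2 : P*P = P) (hPs : star P = P) (hPQ : P + Q = 1)
    (hsP : ∀ X : A, (∀ Y : A, P*Y*X = 0) → X = 0)
    (hsQ : ∀ X : A, (∀ Y : A, Q*Y*X = 0) → X = 0)
    (hinj : Function.Injective φ) (hsur : Function.Surjective φ) (hz0 : φ 0 = 0)
    (hb : ∀ a b : A, ∀ Ξ ∈ ({P, Q, 1} : Set A), φ (pn (k+3) a b Ξ) = pn (k+3) (φ a) (φ b) (φ Ξ))
    (x y : A) :
    φ (Q*x*Q + P*y*Q) = φ (Q*x*Q) + φ (P*y*Q) := by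
  have hQ2 : Q*Q = Q := hQ2_of P Q hP2 hPQ
  have hQs : star Q = Q := hQs_of P Q hPs hPQ
  have hPQ0 : P*Q = 0 := hPQ0_of P Q hP2 hPQ
  have hQP0 : Q*P = 0 := hQP0_of P Q hP2 hPQ
  have hP2' : ∀ w : A, P*(P*w) = P*w := fun w => by rw [← mul_assoc, hP2]
  have hQ2' : ∀ w : A, Q*(Q*w) = Q*w := fun w => by rw [← mul_assoc, hQ2]
  have hPQ0' : ∀ w : A, P*(Q*w) = 0 := fun w => by rw [← mul_assoc, hPQ0, zero_mul]
  have hQP0' : ∀ w : A, Q*(P*w) = 0 := fun w => by rw [← mul_assoc, hQP0, zero_mul]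
  have hPmem : P ∈ ({P, Q, 1} : Set A) := by simp
  have hQmem : Q ∈ ({P, Q, 1} : Set A) := by simp
  obtain ⟨t, ht⟩ := hsur (φ (Q*x*Q) + φ (P*y*Q))
  suffices hts : t = Q*x*Q + P*y*Q by rw [← hts, ht]
  have va21 : pn (k+3) P (Q*x*Q) P = 0 := by
    rw [val_a P Q hP2 hPs hPQ k]
    rw [show Q*(Q*x*Q)*P = 0 from by
      simp only [mul_assoc, hQ2', hQP0, mul_zero, zero_mul]]
    simp
  have vb21 : pn (k+3) P (P*y*Q) P = 0 := by
    rw [val_a P Q hP2 hPs hPQ k]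
    rw [show Q*(P*y*Q)*P = 0 from by
      simp only [mul_assoc, hQP0', hQP0, mul_zero, zero_mul]]
    simp
  have va12 : pn (k+3) P (Q*x*Q) Q = 0 := by
    rw [val_b P Q hP2 hPs hPQ k]
    rw [show P*(Q*x*Q)*Q = 0 from by
      simp only [mul_assoc, hPQ0', hPQ0, mul_zero, zero_mul]]
    simp
  have vbC : ∀ z, pn (k+3) (P*z*Q) (P*y*Q) Q = 0 := by
    intro z
    rw [val_c P Q hP2 hPs hPQ k]
    rw [show P*z*(Q*(P*y*Q)*Q) = 0 from by
      simp only [mul_assoc, hQP0', hQP0, mul_zero, zero_mul]]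
    simp
  have vaC' : ∀ z, pn (k+3) (Q*z*P) (Q*x*Q) P = 0 := by
    intro z
    rw [val_c Q P hQ2 hQs (by rw [add_comm]; exact hPQ) k]
    rw [show Q*z*(P*(Q*x*Q)*P) = 0 from by
      simp only [mul_assoc, hPQ0', hPQ0, mul_zero, zero_mul]]
    simp
  have vbC' : ∀ z, pn (k+3) (Q*z*P) (P*y*Q) P = 0 := by
    intro z
    rw [val_c Q P hQ2 hQs (by rw [add_comm]; exact hPQ) k]
    rw [show Q*z*(P*(P*y*Q)*P) = 0 from by
      simp only [mul_assoc, hP2', hP2, hQP0, mul_zero, zero_mul]]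
    simp
  have c21 : Q*t*P = Q*(Q*x*Q + P*y*Q)*P := by
    apply comp21_of P Q hP2 hPs hPQ k
    apply merge2 P Q φ k hinj hb hPmem ht
    simp only [pn_add_right, va21, vb21, hz0, add_zero, zero_add]
  have c12 : P*t*Q = P*(Q*x*Q + P*y*Q)*Q := by
    apply comp12_of P Q hP2 hPs hPQ k
    apply merge2 P Q φ k hinj hb hQmem ht
    simp only [pn_add_right, va12, hz0, zero_add]
  have c22 : Q*t*Q = Q*(Q*x*Q + P*y*Q)*Q := by
    apply comp22_of P Q hP2 hPs hPQ hsP k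
    intro z
    apply merge2 P Q φ k hinj hb hQmem ht
    simp only [pn_add_right, vbC z, hz0, add_zero]
  have c11 : P*t*P = P*(Q*x*Q + P*y*Q)*P := by
    apply comp22_of Q P hQ2 hQs (by rw [add_comm]; exact hPQ) hsQ k
    intro z
    apply merge2 P Q φ k hinj hb hPmem ht
    simp only [pn_add_right, vaC' z, vbC' z, hz0, add_zero, zero_add]
  exact eqOfComps P Q hPQ _ _ c11 c12 c21 c22

lemma stepA (hP2 : P*P = P) (hPs : star P = P) (hPQ : P + Q = 1)
    (hsP : ∀ X : A, (∀ Y : A, P*Y*X = 0) → X = 0)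
    (hsQ : ∀ X : A, (∀ Y : A, Q*Y*X = 0) → X = 0)
    (hinj : Function.Injective φ) (hsur : Function.Surjective φ) (hz0 : φ 0 = 0)
    (hb : ∀ a b : A, ∀ Ξ ∈ ({P, Q, 1} : Set A), φ (pn (k+3) a b Ξ) = pn (k+3) (φ a) (φ b) (φ Ξ))
    (x y : A) :
    φ ((P*x*Q + P*y*Q) - star (P*x*Q + P*y*Q))
      = φ (P*x*Q - star (P*x*Q)) + φ (P*y*Q - star (P*y*Q)) := by
  have hQ2 : Q*Q = Q := hQ2_of P Q hP2 hPQ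
  have hQs : star Q = Q := hQs_of P Q hPs hPQ
  have hP2' : ∀ w : A, P*(P*w) = P*w := fun w => by rw [← mul_assoc, hP2]
  have hQmem : Q ∈ ({P, Q, 1} : Set A) := by simp
  have hu : φ (P + P*y*Q) = φ P + φ (P*y*Q) := by
    have h0 := addD1 P Q φ k hP2 hPs hPQ hsP hsQ hinj hsur hz0 hb P y
    rwa [show P*P*P = P from by rw [hP2, hP2]] at h0
  have hv : φ (P*x*Q + Q) = φ (P*x*Q) + φ Q := by
    have h0 := addD2 P Q φ k hP2 hPs hPQ hsP hsQ hinj hsur hz0 hb Q x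
    rw [show Q*Q*Q = Q from by rw [hQ2, hQ2]] at h0
    rw [add_comm (P*x*Q) Q, h0, add_comm]
  have vPa : pn (k+3) P (P*x*Q) Q = P*x*Q - star (P*x*Q) := by
    rw [val_b P Q hP2 hPs hPQ k,
      show P*(P*x*Q)*Q = P*x*Q from by simp only [mul_assoc, hP2', hQ2]]
  have vPQ : pn (k+3) P Q Q = 0 := val_PQ P Q hP2 hPs hPQ k
  have vba : pn (k+3) (P*y*Q) (P*x*Q) Q = 0 := val_h P Q hP2 hPs hPQ k x y
  have vbQ : pn (k+3) (P*y*Q) Q Q = P*y*Q - star (P*y*Q) := val_g P Q hP2 hPs hPQ k y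
  have hbul := hb (P + P*y*Q) (P*x*Q + Q) Q hQmem
  rw [val_stepA P Q hP2 hPs hPQ k x y, hu, hv] at hbul
  simp only [pn_add_left, pn_add_right] at hbul
  rw [← hb P (P*x*Q) Q hQmem, ← hb P Q Q hQmem,
    ← hb (P*y*Q) (P*x*Q) Q hQmem, ← hb (P*y*Q) Q Q hQmem, vPa, vPQ, vba, vbQ, hz0] at hbul
  simpa using hbul

lemma add12 (hP2 : P*P = P) (hPs : star P = P) (hPQ : P + Q = 1)
    (hsP : ∀ X : A, (∀ Y : A, P*Y*X = 0) → X = 0)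
    (hsQ : ∀ X : A, (∀ Y : A, Q*Y*X = 0) → X = 0)
    (hinj : Function.Injective φ) (hsur : Function.Surjective φ) (hz0 : φ 0 = 0)
    (hb : ∀ a b : A, ∀ Ξ ∈ ({P, Q, 1} : Set A), φ (pn (k+3) a b Ξ) = pn (k+3) (φ a) (φ b) (φ Ξ))
    (x y : A) :
    φ (P*x*Q + P*y*Q) = φ (P*x*Q) + φ (P*y*Q) := by
  have hQ2 : Q*Q = Q := hQ2_of P Q hP2 hPQ
  have hQs : star Q = Q := hQs_of P Q hPs hPQ
  have hPQ0 : P*Q = 0 := hPQ0_of P Q hP2 hPQ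
  have hQP0 : Q*P = 0 := hQP0_of P Q hP2 hPQ
  have hP2' : ∀ w : A, P*(P*w) = P*w := fun w => by rw [← mul_assoc, hP2]
  have hQ2' : ∀ w : A, Q*(Q*w) = Q*w := fun w => by rw [← mul_assoc, hQ2]
  have hPQ0' : ∀ w : A, P*(Q*w) = 0 := fun w => by rw [← mul_assoc, hPQ0, zero_mul]
  have hQP0' : ∀ w : A, Q*(P*w) = 0 := fun w => by rw [← mul_assoc, hQP0, zero_mul]
  have hPmem : P ∈ ({P, Q, 1} : Set A) := by simp
  have hQmem : Q ∈ ({P, Q, 1} : Set A) := by simp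
  obtain ⟨t, ht⟩ := hsur (φ (P*x*Q) + φ (P*y*Q))
  suffices hts : t = P*x*Q + P*y*Q by rw [← hts, ht]
  have vaP : ∀ u : A, pn (k+3) P (P*u*Q) P = 0 := by
    intro u
    rw [val_a P Q hP2 hPs hPQ k]
    rw [show Q*(P*u*Q)*P = 0 from by
      simp only [mul_assoc, hQP0', hQP0, mul_zero, zero_mul]]
    simp
  have vaC : ∀ u z : A, pn (k+3) (P*z*Q) (P*u*Q) Q = 0 := by
    intro u z
    rw [val_c P Q hP2 hPs hPQ k]
    rw [show P*z*(Q*(P*u*Q)*Q) = 0 from by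
      simp only [mul_assoc, hQP0', hQP0, mul_zero, zero_mul]]
    simp
  have vaC' : ∀ u z : A, pn (k+3) (Q*z*P) (P*u*Q) P = 0 := by
    intro u z
    rw [val_c Q P hQ2 hQs (by rw [add_comm]; exact hPQ) k]
    rw [show Q*z*(P*(P*u*Q)*P) = 0 from by
      simp only [mul_assoc, hP2', hP2, hQP0, mul_zero, zero_mul]]
    simp
  have vb : ∀ u : A, pn (k+3) P (P*u*Q) Q = P*u*Q - star (P*u*Q) := by
    intro u
    rw [val_b P Q hP2 hPs hPQ k,
      show P*(P*u*Q)*Q = P*u*Q from by simp only [mul_assoc, hP2', hQ2]]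
  have c21 : Q*t*P = Q*(P*x*Q + P*y*Q)*P := by
    apply comp21_of P Q hP2 hPs hPQ k
    apply merge2 P Q φ k hinj hb hPmem ht
    simp only [pn_add_right, vaP, hz0, add_zero]
  have c22 : Q*t*Q = Q*(P*x*Q + P*y*Q)*Q := by
    apply comp22_of P Q hP2 hPs hPQ hsP k
    intro z
    apply merge2 P Q φ k hinj hb hQmem ht
    simp only [pn_add_right, vaC, hz0, add_zero]
  have c11 : P*t*P = P*(P*x*Q + P*y*Q)*P := by
    apply comp22_of Q P hQ2 hQs (by rw [add_comm]; exact hPQ) hsQ k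
    intro z
    apply merge2 P Q φ k hinj hb hPmem ht
    simp only [pn_add_right, vaC', hz0, add_zero]
  have c12 : P*t*Q = P*(P*x*Q + P*y*Q)*Q := by
    apply comp12_of P Q hP2 hPs hPQ k
    apply merge2 P Q φ k hinj hb hQmem ht
    rw [show pn (k+3) P (P*x*Q + P*y*Q) Q
        = (P*x*Q + P*y*Q) - star (P*x*Q + P*y*Q) from by
      rw [val_b P Q hP2 hPs hPQ k,
        show P*(P*x*Q + P*y*Q)*Q = P*x*Q + P*y*Q from by
          simp only [mul_add, add_mul, mul_assoc, hP2', hQ2]]]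
    rw [vb x, vb y]
    exact (stepA P Q φ k hP2 hPs hPQ hsP hsQ hinj hsur hz0 hb x y).symm
  exact eqOfComps P Q hPQ _ _ c11 c12 c21 c22

lemma add11 (hP2 : P*P = P) (hPs : star P = P) (hPQ : P + Q = 1)
    (hsP : ∀ X : A, (∀ Y : A, P*Y*X = 0) → X = 0)
    (hsQ : ∀ X : A, (∀ Y : A, Q*Y*X = 0) → X = 0)
    (hinj : Function.Injective φ) (hsur : Function.Surjective φ) (hz0 : φ 0 = 0)
    (hb : ∀ a b : A, ∀ Ξ ∈ ({P, Q, 1} : Set A), φ (pn (k+3) a b Ξ) = pn (k+3) (φ a) (φ b) (φ Ξ))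
    (x y : A) :
    φ (P*x*P + P*y*P) = φ (P*x*P) + φ (P*y*P) := by
  have hQ2 : Q*Q = Q := hQ2_of P Q hP2 hPQ
  have hQs : star Q = Q := hQs_of P Q hPs hPQ
  have hQP : Q + P = 1 := by rw [add_comm]; exact hPQ
  have hPQ0 : P*Q = 0 := hPQ0_of P Q hP2 hPQ
  have hQP0 : Q*P = 0 := hQP0_of P Q hP2 hPQ
  have hP2' : ∀ w : A, P*(P*w) = P*w := fun w => by rw [← mul_assoc, hP2]
  have hQ2' : ∀ w : A, Q*(Q*w) = Q*w := fun w => by rw [← mul_assoc, hQ2]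
  have hPQ0' : ∀ w : A, P*(Q*w) = 0 := fun w => by rw [← mul_assoc, hPQ0, zero_mul]
  have hQP0' : ∀ w : A, Q*(P*w) = 0 := fun w => by rw [← mul_assoc, hQP0, zero_mul]
  have hPmem : P ∈ ({P, Q, 1} : Set A) := by simp
  have hQmem : Q ∈ ({P, Q, 1} : Set A) := by simp
  obtain ⟨t, ht⟩ := hsur (φ (P*x*P) + φ (P*y*P))
  suffices hts : t = P*x*P + P*y*P by rw [← hts, ht]
  have vaP : ∀ u : A, pn (k+3) P (P*u*P) P = 0 := by
    intro u
    rw [val_a P Q hP2 hPs hPQ k]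
    rw [show Q*(P*u*P)*P = 0 from by
      simp only [mul_assoc, hQP0', hQP0, mul_zero, zero_mul]]
    simp
  have vaQ : ∀ u : A, pn (k+3) P (P*u*P) Q = 0 := by
    intro u
    rw [val_b P Q hP2 hPs hPQ k]
    rw [show P*(P*u*P)*Q = 0 from by
      simp only [mul_assoc, hP2', hP2, hPQ0, mul_zero, zero_mul]]
    simp
  have vaC : ∀ u z : A, pn (k+3) (P*z*Q) (P*u*P) Q = 0 := by
    intro u z
    rw [val_c P Q hP2 hPs hPQ k]
    rw [show P*z*(Q*(P*u*P)*Q) = 0 from by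
      simp only [mul_assoc, hQP0', hQP0, mul_zero, zero_mul]]
    simp
  have c21 : Q*t*P = Q*(P*x*P + P*y*P)*P := by
    apply comp21_of P Q hP2 hPs hPQ k
    apply merge2 P Q φ k hinj hb hPmem ht
    simp only [pn_add_right, vaP, hz0, add_zero]
  have c12 : P*t*Q = P*(P*x*P + P*y*P)*Q := by
    apply comp12_of P Q hP2 hPs hPQ k
    apply merge2 P Q φ k hinj hb hQmem ht
    simp only [pn_add_right, vaQ, hz0, add_zero]
  have c22 : Q*t*Q = Q*(P*x*P + P*y*P)*Q := by
    apply comp22_of P Q hP2 hPs hPQ hsP k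
    intro z
    apply merge2 P Q φ k hinj hb hQmem ht
    simp only [pn_add_right, vaC, hz0, add_zero]
  have c11 : P*t*P = P*(P*x*P + P*y*P)*P := by
    apply comp22_of Q P hQ2 hQs hQP hsQ k
    intro z
    apply merge2 P Q φ k hinj hb hPmem ht
    have v1 : ∀ u : A, pn (k+3) (Q*z*P) (P*u*P) P
        = Q*(z*(P*u*P))*P - star (Q*(z*(P*u*P))*P) := by
      intro u
      rw [val_c Q P hQ2 hQs hQP k,
        show Q*z*(P*(P*u*P)*P) = Q*(z*(P*u*P))*P from by
          simp only [mul_assoc, hP2, hP2']]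
    have vsum : pn (k+3) (Q*z*P) (P*x*P + P*y*P) P
        = (Q*(z*(P*x*P))*P + Q*(z*(P*y*P))*P)
          - star (Q*(z*(P*x*P))*P + Q*(z*(P*y*P))*P) := by
      rw [val_c Q P hQ2 hQs hQP k,
        show Q*z*(P*(P*x*P + P*y*P)*P) = Q*(z*(P*x*P))*P + Q*(z*(P*y*P))*P from by
          simp only [mul_add, add_mul, mul_assoc, hP2, hP2']]
    rw [v1 x, v1 y, vsum]
    exact (stepA Q P φ k hQ2 hQs hQP hsQ hsP hinj hsur hz0
      (hb_swap P Q φ k hb) (z*(P*x*P)) (z*(P*y*P))).symm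
  exact eqOfComps P Q hPQ _ _ c11 c12 c21 c22


lemma add4 (hP2 : P*P = P) (hPs : star P = P) (hPQ : P + Q = 1)
    (hsP : ∀ X : A, (∀ Y : A, P*Y*X = 0) → X = 0)
    (hsQ : ∀ X : A, (∀ Y : A, Q*Y*X = 0) → X = 0)
    (hinj : Function.Injective φ) (hsur : Function.Surjective φ) (hz0 : φ 0 = 0)
    (hb : ∀ a b : A, ∀ Ξ ∈ ({P, Q, 1} : Set A), φ (pn (k+3) a b Ξ) = pn (k+3) (φ a) (φ b) (φ Ξ))
    (x : A) :
    φ x = φ (P*x*P) + φ (P*x*Q) + φ (Q*x*P) + φ (Q*x*Q) := by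
  have hQ2 : Q*Q = Q := hQ2_of P Q hP2 hPQ
  have hQs : star Q = Q := hQs_of P Q hPs hPQ
  have hQP : Q + P = 1 := by rw [add_comm]; exact hPQ
  have hPQ0 : P*Q = 0 := hPQ0_of P Q hP2 hPQ
  have hQP0 : Q*P = 0 := hQP0_of P Q hP2 hPQ
  have hP2' : ∀ w : A, P*(P*w) = P*w := fun w => by rw [← mul_assoc, hP2]
  have hQ2' : ∀ w : A, Q*(Q*w) = Q*w := fun w => by rw [← mul_assoc, hQ2]
  have hPQ0' : ∀ w : A, P*(Q*w) = 0 := fun w => by rw [← mul_assoc, hPQ0, zero_mul]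
  have hQP0' : ∀ w : A, Q*(P*w) = 0 := fun w => by rw [← mul_assoc, hQP0, zero_mul]
  have hPmem : P ∈ ({P, Q, 1} : Set A) := by simp
  have hQmem : Q ∈ ({P, Q, 1} : Set A) := by simp
  obtain ⟨t, ht⟩ := hsur (φ (P*x*P) + φ (P*x*Q) + φ (Q*x*P) + φ (Q*x*Q))
  have hrx : P*x*P + P*x*Q + Q*x*P + Q*x*Q = x := by
    have h1 : (P+Q)*x*(P+Q) = x := by rw [hPQ, one_mul, mul_one]
    calc P*x*P + P*x*Q + Q*x*P + Q*x*Q = (P+Q)*x*(P+Q) := by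
          simp only [add_mul, mul_add]; abel
      _ = x := h1
  suffices hts : t = x by rw [← ht, hts]
  -- val_a zeros
  have va1 : pn (k+3) P (P*x*P) P = 0 := by
    rw [val_a P Q hP2 hPs hPQ k]
    rw [show Q*(P*x*P)*P = 0 from by
      simp only [mul_assoc, hQP0', hQP0, mul_zero, zero_mul]]
    simp
  have va2 : pn (k+3) P (P*x*Q) P = 0 := by
    rw [val_a P Q hP2 hPs hPQ k]
    rw [show Q*(P*x*Q)*P = 0 from by
      simp only [mul_assoc, hQP0', hQP0, mul_zero, zero_mul]]
    simp
  have va4 : pn (k+3) P (Q*x*Q) P = 0 := by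
    rw [val_a P Q hP2 hPs hPQ k]
    rw [show Q*(Q*x*Q)*P = 0 from by
      simp only [mul_assoc, hQ2', hQP0, mul_zero, zero_mul]]
    simp
  -- val_b zeros
  have vb1 : pn (k+3) P (P*x*P) Q = 0 := by
    rw [val_b P Q hP2 hPs hPQ k]
    rw [show P*(P*x*P)*Q = 0 from by
      simp only [mul_assoc, hP2', hP2, hPQ0, mul_zero, zero_mul]]
    simp
  have vb3 : pn (k+3) P (Q*x*P) Q = 0 := by
    rw [val_b P Q hP2 hPs hPQ k]
    rw [show P*(Q*x*P)*Q = 0 from by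
      simp only [mul_assoc, hPQ0', hPQ0, mul_zero, zero_mul]]
    simp
  have vb4 : pn (k+3) P (Q*x*Q) Q = 0 := by
    rw [val_b P Q hP2 hPs hPQ k]
    rw [show P*(Q*x*Q)*Q = 0 from by
      simp only [mul_assoc, hPQ0', hPQ0, mul_zero, zero_mul]]
    simp
  -- val_c zeros (P z Q side)
  have vc1 : ∀ z, pn (k+3) (P*z*Q) (P*x*P) Q = 0 := by
    intro z
    rw [val_c P Q hP2 hPs hPQ k]
    rw [show P*z*(Q*(P*x*P)*Q) = 0 from by
      simp only [mul_assoc, hQP0', hQP0, mul_zero, zero_mul]]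
    simp
  have vc2 : ∀ z, pn (k+3) (P*z*Q) (P*x*Q) Q = 0 := by
    intro z
    rw [val_c P Q hP2 hPs hPQ k]
    rw [show P*z*(Q*(P*x*Q)*Q) = 0 from by
      simp only [mul_assoc, hQP0', hQP0, mul_zero, zero_mul]]
    simp
  have vc3 : ∀ z, pn (k+3) (P*z*Q) (Q*x*P) Q = 0 := by
    intro z
    rw [val_c P Q hP2 hPs hPQ k]
    rw [show P*z*(Q*(Q*x*P)*Q) = 0 from by
      simp only [mul_assoc, hQ2', hPQ0, mul_zero, zero_mul]]
    simp
  -- val_c zeros (Q z P side)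
  have vd2 : ∀ z, pn (k+3) (Q*z*P) (P*x*Q) P = 0 := by
    intro z
    rw [val_c Q P hQ2 hQs hQP k]
    rw [show Q*z*(P*(P*x*Q)*P) = 0 from by
      simp only [mul_assoc, hP2', hP2, hQP0, mul_zero, zero_mul]]
    simp
  have vd3 : ∀ z, pn (k+3) (Q*z*P) (Q*x*P) P = 0 := by
    intro z
    rw [val_c Q P hQ2 hQs hQP k]
    rw [show Q*z*(P*(Q*x*P)*P) = 0 from by
      simp only [mul_assoc, hPQ0', hPQ0, mul_zero, zero_mul]]
    simp
  have vd4 : ∀ z, pn (k+3) (Q*z*P) (Q*x*Q) P = 0 := by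
    intro z
    rw [val_c Q P hQ2 hQs hQP k]
    rw [show Q*z*(P*(Q*x*Q)*P) = 0 from by
      simp only [mul_assoc, hPQ0', hPQ0, mul_zero, zero_mul]]
    simp
  have c21 : Q*t*P = Q*(P*x*P + P*x*Q + Q*x*P + Q*x*Q)*P := by
    apply comp21_of P Q hP2 hPs hPQ k
    apply merge2_4 P Q φ k hinj hb hPmem ht
    simp only [pn_add_right, va1, va2, va4, hz0, zero_add, add_zero]
  have c12 : P*t*Q = P*(P*x*P + P*x*Q + Q*x*P + Q*x*Q)*Q := by
    apply comp12_of P Q hP2 hPs hPQ k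
    apply merge2_4 P Q φ k hinj hb hQmem ht
    simp only [pn_add_right, vb1, vb3, vb4, hz0, zero_add, add_zero]
  have c22 : Q*t*Q = Q*(P*x*P + P*x*Q + Q*x*P + Q*x*Q)*Q := by
    apply comp22_of P Q hP2 hPs hPQ hsP k
    intro z
    apply merge2_4 P Q φ k hinj hb hQmem ht
    simp only [pn_add_right, vc1 z, vc2 z, vc3 z, hz0, zero_add, add_zero]
  have c11 : P*t*P = P*(P*x*P + P*x*Q + Q*x*P + Q*x*Q)*P := by
    apply comp22_of Q P hQ2 hQs hQP hsQ k
    intro z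
    apply merge2_4 P Q φ k hinj hb hPmem ht
    simp only [pn_add_right, vd2 z, vd3 z, vd4 z, hz0, zero_add, add_zero]
  have := eqOfComps P Q hPQ _ _ c11 c12 c21 c22
  rw [this, hrx]

lemma addAll (hP2 : P*P = P) (hPs : star P = P) (hPQ : P + Q = 1)
    (hsP : ∀ X : A, (∀ Y : A, P*Y*X = 0) → X = 0)
    (hsQ : ∀ X : A, (∀ Y : A, Q*Y*X = 0) → X = 0)
    (hinj : Function.Injective φ) (hsur : Function.Surjective φ) (hz0 : φ 0 = 0)
    (hb : ∀ a b : A, ∀ Ξ ∈ ({P, Q, 1} : Set A), φ (pn (k+3) a b Ξ) = pn (k+3) (φ a) (φ b) (φ Ξ)) :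
    ∀ x y : A, φ (x + y) = φ x + φ y := by
  intro x y
  have hQ2 : Q*Q = Q := hQ2_of P Q hP2 hPQ
  have hQs : star Q = Q := hQs_of P Q hPs hPQ
  have hQP : Q + P = 1 := by rw [add_comm]; exact hPQ
  have hbs := hb_swap P Q φ k hb
  rw [add4 P Q φ k hP2 hPs hPQ hsP hsQ hinj hsur hz0 hb (x+y)]
  rw [show P*(x+y)*P = P*x*P + P*y*P from by simp only [mul_add, add_mul]]
  rw [show P*(x+y)*Q = P*x*Q + P*y*Q from by simp only [mul_add, add_mul]]
  rw [show Q*(x+y)*P = Q*x*P + Q*y*P from by simp only [mul_add, add_mul]]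
  rw [show Q*(x+y)*Q = Q*x*Q + Q*y*Q from by simp only [mul_add, add_mul]]
  rw [add11 P Q φ k hP2 hPs hPQ hsP hsQ hinj hsur hz0 hb x y,
    add12 P Q φ k hP2 hPs hPQ hsP hsQ hinj hsur hz0 hb x y,
    add12 Q P φ k hQ2 hQs hQP hsQ hsP hinj hsur hz0 hbs x y,
    add11 Q P φ k hQ2 hQs hQP hsQ hsP hinj hsur hz0 hbs x y]
  rw [add4 P Q φ k hP2 hPs hPQ hsP hsQ hinj hsur hz0 hb x,
    add4 P Q φ k hP2 hPs hPQ hsP hsQ hinj hsur hz0 hb y]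
  abel

end Claims

section Mult

lemma starI : star Complex.I = -Complex.I := by
  rw [Complex.star_def, Complex.conj_I]

lemma csmul_cancel {M : Type*} [AddCommGroup M] [Module ℂ M] {c : ℂ} (hc : c ≠ 0) {x y : M}
    (h : c • x = c • y) : x = y := by
  have h2 := congrArg (fun z => c⁻¹ • z) h
  simpa [smul_smul, inv_mul_cancel₀ hc] using h2

lemma starLie_I_smul {S : Type*} [Ring S] [StarRing S] [Module ℂ S] [StarModule ℂ S]
    [IsScalarTower ℂ S S] [SMulCommClass ℂ S S] (u v : S) :
    starLie (Complex.I • u) v = Complex.I • (u*v + v*star u) := by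
  rw [starLie, star_smul, smul_mul_assoc, mul_smul_comm, starI, neg_smul,
    sub_neg_eq_add, smul_add]

lemma smul_sub_star {S : Type*} [Ring S] [StarRing S] [Module ℂ S] [StarModule ℂ S]
    (w : S) :
    Complex.I • w - star (Complex.I • w) = Complex.I • (w + star w) := by
  rw [star_smul, starI, neg_smul, sub_neg_eq_add, smul_add]

theorem multAll {A A' : Type*} [Ring A] [StarRing A] [Module ℂ A] [StarModule ℂ A]
    [IsScalarTower ℂ A A] [SMulCommClass ℂ A A]
    [Ring A'] [StarRing A'] [Module ℂ A'] [StarModule ℂ A']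
    [IsScalarTower ℂ A' A'] [SMulCommClass ℂ A' A']
    (P Q : A) (φ : A → A') (k : ℕ)
    (hP2 : P*P = P) (hPs : star P = P) (hPQ : P + Q = 1)
    (hsP : ∀ X : A, (∀ Y : A, P*Y*X = 0) → X = 0)
    (hsQ : ∀ X : A, (∀ Y : A, Q*Y*X = 0) → X = 0)
    (hinj : Function.Injective φ) (hsur : Function.Surjective φ)
    (hunit : φ 1 = 1)
    (hsmul : ∀ (c : ℂ) (a : A), φ (c • a) = c • φ a)
    (hb : ∀ a b : A, ∀ Ξ ∈ ({P, Q, 1} : Set A), φ (pn (k+3) a b Ξ) = pn (k+3) (φ a) (φ b) (φ Ξ)) :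
    ∀ u v : A, φ (u * v) = φ u * φ v := by
  have hz0 : φ 0 = 0 := by
    have h := hsmul 0 0
    simpa using h
  have hadd : ∀ x y : A, φ (x + y) = φ x + φ y :=
    addAll P Q φ k hP2 hPs hPQ hsP hsQ hinj hsur hz0 hb
  have h1mem : (1:A) ∈ ({P, Q, 1} : Set A) := by simp
  have hcast : ((2^k : ℕ) : ℂ) ≠ 0 := Nat.cast_ne_zero.mpr (pow_ne_zero k two_ne_zero)
  have E1 : ∀ u v : A, φ (starLie u v - star (starLie u v))
      = starLie (φ u) (φ v) - star (starLie (φ u) (φ v)) := by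
    intro u v
    have h := hb u v 1 h1mem
    rw [hunit, val_one k u v, val_one k (φ u) (φ v)] at h
    rw [← Nat.cast_smul_eq_nsmul ℂ, ← Nat.cast_smul_eq_nsmul ℂ, hsmul] at h
    exact csmul_cancel hcast h
  have E2 : ∀ u v : A, φ ((u*v + v*star u) + star (u*v + v*star u))
      = (φ u*φ v + φ v*star (φ u)) + star (φ u*φ v + φ v*star (φ u)) := by
    intro u v
    have h := hb (Complex.I • u) v 1 h1mem
    rw [hunit, val_one k _ v, val_one k _ (φ v), hsmul] at h
    rw [starLie_I_smul u v, starLie_I_smul (φ u) (φ v)] at h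
    rw [smul_sub_star, smul_sub_star] at h
    rw [← Nat.cast_smul_eq_nsmul ℂ, ← Nat.cast_smul_eq_nsmul ℂ, smul_smul, smul_smul,
      hsmul] at h
    exact csmul_cancel (mul_ne_zero hcast Complex.I_ne_zero) h
  have hA : ∀ u v : A, φ (u*v + u*star v) = φ u*φ v + φ u*star (φ v) := by
    intro u v
    have hsum := hadd (starLie u v - star (starLie u v))
      ((u*v + v*star u) + star (u*v + v*star u))
    rw [E1 u v, E2 u v] at hsum
    rw [show (starLie u v - star (starLie u v)) + ((u*v + v*star u) + star (u*v + v*star u))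
        = (2:ℕ) • (u*v + u*star v) from by
      simp only [starLie, star_sub, star_add, star_mul, star_star, two_smul]; abel] at hsum
    rw [show (starLie (φ u) (φ v) - star (starLie (φ u) (φ v)))
        + ((φ u*φ v + φ v*star (φ u)) + star (φ u*φ v + φ v*star (φ u)))
        = (2:ℕ) • (φ u*φ v + φ u*star (φ v)) from by
      simp only [starLie, star_sub, star_add, star_mul, star_star, two_smul]; abel] at hsum
    rw [← Nat.cast_smul_eq_nsmul ℂ, ← Nat.cast_smul_eq_nsmul ℂ, hsmul] at hsum
    exact csmul_cancel (by norm_num) hsum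
  have hB : ∀ u v : A, φ (u*v - u*star v) = φ u*φ v - φ u*star (φ v) := by
    intro u v
    have h := hA u (Complex.I • v)
    rw [hsmul] at h
    rw [show u*(Complex.I • v) + u*star (Complex.I • v) = Complex.I • (u*v - u*star v) from by
      rw [star_smul, starI, mul_smul_comm, neg_smul, mul_neg, mul_smul_comm,
        ← sub_eq_add_neg, ← smul_sub]] at h
    rw [show φ u*(Complex.I • φ v) + φ u*star (Complex.I • φ v)
        = Complex.I • (φ u*φ v - φ u*star (φ v)) from by
      rw [star_smul, starI, mul_smul_comm, neg_smul, mul_neg, mul_smul_comm,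
        ← sub_eq_add_neg, ← smul_sub]] at h
    rw [hsmul] at h
    exact csmul_cancel Complex.I_ne_zero h
  intro u v
  have h := hadd (u*v + u*star v) (u*v - u*star v)
  rw [hA u v, hB u v] at h
  rw [show (u*v + u*star v) + (u*v - u*star v) = (2:ℕ)•(u*v) from by
    rw [two_smul]; abel] at h
  rw [show (φ u*φ v + φ u*star (φ v)) + (φ u*φ v - φ u*star (φ v)) = (2:ℕ)•(φ u*φ v) from by
    rw [two_smul]; abel] at h
  rw [← Nat.cast_smul_eq_nsmul ℂ, ← Nat.cast_smul_eq_nsmul ℂ, hsmul] at h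
  exact csmul_cancel (by norm_num) h

end Mult

lemma n2_mult {A A' : Type*} [Ring A] [StarRing A] [Module ℂ A] [StarModule ℂ A]
    [IsScalarTower ℂ A A] [SMulCommClass ℂ A A]
    [Ring A'] [StarRing A'] [Module ℂ A'] [StarModule ℂ A']
    [IsScalarTower ℂ A' A'] [SMulCommClass ℂ A' A']
    (φ : A → A') (hsmul : ∀ (c : ℂ) (a : A), φ (c • a) = c • φ a)
    (h2 : ∀ u v : A, φ (starLie u v) = starLie (φ u) (φ v))
    (a b : A) (hba : b * star a = 0) : φ (a * b) = φ a * φ b := by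
  have e1 := h2 a b
  rw [show starLie a b = a * b from by rw [starLie, hba, sub_zero]] at e1
  have e2 := h2 (Complex.I • a) b
  rw [show starLie (Complex.I • a) b = Complex.I • (a*b) from by
    rw [starLie_I_smul, hba, add_zero]] at e2
  rw [hsmul, hsmul, starLie_I_smul] at e2
  have e2' : φ (a*b) = φ a*φ b + φ b*star (φ a) := csmul_cancel Complex.I_ne_zero e2
  rw [starLie] at e1
  have hzz : φ b * star (φ a) = 0 := by
    have h := e1.symm.trans e2'
    have h3 : φ a*φ b + φ b*star (φ a) - (φ a*φ b - φ b*star (φ a)) = 0 := by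
      rw [← h]; abel
    have h4 : (2:ℂ) • (φ b * star (φ a)) = (2:ℂ) • (0:A') := by
      rw [smul_zero, two_smul, ← h3]; abel
    exact csmul_cancel (by norm_num) h4
  rw [e1, hzz, sub_zero]


variable {A A' : Type*}
  [NormedRing A] [StarRing A] [CStarRing A] [NormedAlgebra ℂ A]
  [CompleteSpace A] [StarModule ℂ A]
  [NormedRing A'] [StarRing A'] [CStarRing A'] [NormedAlgebra ℂ A']
  [CompleteSpace A'] [StarModule ℂ A']

theorem stmt14
    (P₁ : A) (hP₁proj : P₁ * P₁ = P₁) (hP₁star : star P₁ = P₁)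
    (hP₁ne0 : P₁ ≠ 0) (hP₁ne1 : P₁ ≠ 1)
    (P₂ : A) (hP₂ : P₂ = 1 - P₁)
    (hspade : ∀ Pj ∈ ({P₁, P₂} : Set A), ∀ X : A, (∀ Y : A, Pj * Y * X = 0) → X = 0)
    (n : ℕ) (hn : 2 ≤ n)
    (φ : A → A') (hbij : Function.Bijective φ) (hunit : φ 1 = 1)
    (hsmul : ∀ (c : ℂ) (a : A), φ (c • a) = c • φ a)
    (hbullet : ∀ a b : A, ∀ Ξ ∈ ({P₁, P₂, 1} : Set A),
      φ (pn n a b Ξ) = pn n (φ a) (φ b) (φ Ξ))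
    :
    ∀ Pj Pk : A, (Pj = P₁ ∧ Pk = P₂) ∨ (Pj = P₂ ∧ Pk = P₁) →
      ∀ a b : A, (∃ x : A, a = Pj * x * Pj) → (∃ y : A, b = Pj * y * Pk) →
        φ (a * b) = φ a * φ b := by

  rintro Pj Pk hjk a b ⟨x, rfl⟩ ⟨y, rfl⟩
  have hsum : P₁ + P₂ = 1 := by rw [hP₂]; abel
  have hsP : ∀ X : A, (∀ Y : A, P₁*Y*X = 0) → X = 0 := hspade P₁ (by simp)
  have hsQ : ∀ X : A, (∀ Y : A, P₂*Y*X = 0) → X = 0 := hspade P₂ (by simp)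
  have h21 : P₂ * P₁ = 0 := by rw [hP₂, sub_mul, one_mul, hP₁proj, sub_self]
  have h12 : P₁ * P₂ = 0 := by rw [hP₂, mul_sub, mul_one, hP₁proj, sub_self]
  have hP₂proj : P₂ * P₂ = P₂ := by
    rw [hP₂]
    simp only [mul_sub, sub_mul, one_mul, mul_one, hP₁proj]
    abel
  have hP₂star : star P₂ = P₂ := by rw [hP₂, star_sub, star_one, hP₁star]
  obtain ⟨m, rfl⟩ : ∃ m, n = m + 2 := ⟨n - 2, by omega⟩
  cases m with
  | zero =>
    have h2 : ∀ u v : A, φ (starLie u v) = starLie (φ u) (φ v) := by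
      intro u v
      have h := hbullet u v 1 (by simp)
      rw [hunit] at h
      exact h
    apply n2_mult φ hsmul h2
    rcases hjk with ⟨rfl, rfl⟩ | ⟨rfl, rfl⟩
    · have hstar_a : star (Pj*x*Pj) = Pj * (star x * Pj) := by
        rw [star_mul, star_mul, hP₁star]
      rw [hstar_a]
      rw [show Pj*y*Pk * (Pj * (star x * Pj)) = Pj*y*(Pk*Pj) * (star x * Pj) from by
        simp only [mul_assoc]]
      rw [h21, mul_zero, zero_mul]
    · have hstar_a : star (Pj*x*Pj) = Pj * (star x * Pj) := by
        rw [star_mul, star_mul, hP₂star]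
      rw [hstar_a]
      rw [show Pj*y*Pk * (Pj * (star x * Pj)) = Pj*y*(Pk*Pj) * (star x * Pj) from by
        simp only [mul_assoc]]
      rw [h12, mul_zero, zero_mul]
  | succ k =>
    have hb' : ∀ a b : A, ∀ Ξ ∈ ({P₁, P₂, 1} : Set A),
        φ (pn (k+3) a b Ξ) = pn (k+3) (φ a) (φ b) (φ Ξ) := by
      intro a b Ξ hΞ
      exact hbullet a b Ξ hΞ
    exact multAll P₁ P₂ φ k hP₁proj hP₁star hsum hsP hsQ hbij.1 hbij.2 hunit hsmul hb' _ _
end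

section
/- Let A and A' be unital C*-algebras, P₁ a nontrivial symmetric projection in A, P₂ = I_A − P₁, A_{jk} = P_j A P_k, and suppose A satisfies (♠): for j ∈ {1,2}, P_j A X = {0} implies X = 0. Fix an integer n ≥ 2 and let φ: A → A' be a bijective map with φ(I_A) = I_{A'}, φ(λA) = λφ(A) for all λ ∈ ℂ, satisfying (•): φ(p_{n*}(A,B,Ξ,…,Ξ)) = p_{n*}(φ(A),φ(B),φ(Ξ),…,φ(Ξ)) for all A, B ∈ A and Ξ ∈ {P₁, P₂, I_A}. Then for j ≠ k in {1,2}, any A_{jk} ∈ A_{jk} and B_{kj} ∈ A_{kj} satisfy φ(A_{jk} B_{kj}) = φ(A_{jk})φ(B_{kj}). -/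
lemma iter_one_aux {B : Type*} [Ring B] [StarRing B] :
    ∀ (m : ℕ) (z : B), star z = -z → (fun y => starLie y (1:B))^[m] z = (2^m : ℕ) • z := by
  intro m
  induction m with
  | zero => intro z _; simp
  | succ k ih =>
    intro z hz
    rw [Function.iterate_succ_apply]
    have h1 : starLie z (1:B) = (2:ℕ) • z := by
      rw [starLie, mul_one, one_mul, hz, sub_neg_eq_add, two_smul]
    have h2 : star ((2:ℕ) • z) = -((2:ℕ) • z) := by
      rw [two_smul, star_add, hz, neg_add]
    rw [h1, ih _ h2, smul_smul, ← pow_succ]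

variable {A A' : Type*}
  [NormedRing A] [StarRing A] [CStarRing A] [NormedAlgebra ℂ A]
  [CompleteSpace A] [StarModule ℂ A]
  [NormedRing A'] [StarRing A'] [CStarRing A'] [NormedAlgebra ℂ A']
  [CompleteSpace A'] [StarModule ℂ A']

theorem stmt15
    (P₁ : A) (hP₁proj : P₁ * P₁ = P₁) (hP₁star : star P₁ = P₁)
    (hP₁ne0 : P₁ ≠ 0) (hP₁ne1 : P₁ ≠ 1)
    (P₂ : A) (hP₂ : P₂ = 1 - P₁)
    (hspade : ∀ Pj ∈ ({P₁, P₂} : Set A), ∀ X : A, (∀ Y : A, Pj * Y * X = 0) → X = 0)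
    (n : ℕ) (hn : 2 ≤ n)
    (φ : A → A') (hbij : Function.Bijective φ) (hunit : φ 1 = 1)
    (hsmul : ∀ (c : ℂ) (a : A), φ (c • a) = c • φ a)
    (hbullet : ∀ a b : A, ∀ Ξ ∈ ({P₁, P₂, 1} : Set A),
      φ (pn n a b Ξ) = pn n (φ a) (φ b) (φ Ξ))
    :
    ∀ Pj Pk : A, (Pj = P₁ ∧ Pk = P₂) ∨ (Pj = P₂ ∧ Pk = P₁) →
      ∀ a b : A, (∃ x : A, a = Pj * x * Pk) → (∃ y : A, b = Pk * y * Pj) →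
        φ (a * b) = φ a * φ b := by
  have hinj : Function.Injective φ := hbij.1
  have hφ0 : φ 0 = 0 := by simpa using hsmul 0 0
  have smul_cancelA' : ∀ (c : ℂ), c ≠ 0 → ∀ x y : A', c • x = c • y → x = y := by
    intro c hc x y h
    calc x = c⁻¹ • (c • x) := (inv_smul_smul₀ hc x).symm
    _ = c⁻¹ • (c • y) := by rw [h]
    _ = y := inv_smul_smul₀ hc y
  have smul_cancelA : ∀ (c : ℂ), c ≠ 0 → ∀ x y : A, c • x = c • y → x = y := by
    intro c hc x y h
    calc x = c⁻¹ • (c • x) := (inv_smul_smul₀ hc x).symm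
    _ = c⁻¹ • (c • y) := by rw [h]
    _ = y := inv_smul_smul₀ hc y
  -- the key lemma, from Ξ = 1 instance of hbullet
  have key : ∀ u v : A, star (u * v - v * star u) = -(u * v - v * star u) →
      star (φ u * φ v - φ v * star (φ u)) = -(φ u * φ v - φ v * star (φ u)) →
      φ (u * v - v * star u) = φ u * φ v - φ v * star (φ u) := by
    intro u v h1 h2
    have hb1 := hbullet u v 1 (by simp)
    rw [hunit] at hb1
    have e1 : pn n u v 1 = (2^(n-2) : ℕ) • (u*v - v*star u) := by
      rw [show pn n u v 1 = (fun z => starLie z (1:A))^[n-2] (starLie u v) from rfl]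
      rw [show starLie u v = u*v - v*star u from rfl]
      exact iter_one_aux _ _ h1
    have e2 : pn n (φ u) (φ v) (1:A') = (2^(n-2) : ℕ) • (φ u*φ v - φ v*star (φ u)) := by
      rw [show pn n (φ u) (φ v) 1 = (fun z => starLie z (1:A'))^[n-2] (starLie (φ u) (φ v)) from rfl]
      rw [show starLie (φ u) (φ v) = φ u*φ v - φ v*star (φ u) from rfl]
      exact iter_one_aux _ _ h2
    rw [e1, e2, ← Nat.cast_smul_eq_nsmul ℂ, ← Nat.cast_smul_eq_nsmul ℂ, hsmul] at hb1
    refine smul_cancelA' ((2^(n-2) : ℕ) : ℂ) ?_ _ _ hb1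
    exact_mod_cast pow_ne_zero _ (two_ne_zero)
  -- φ preserves u - u*
  have hstar1 : ∀ u : A, φ (u - star u) = φ u - star (φ u) := by
    intro u
    have h := key u 1 (by simp [star_sub, star_star, neg_sub])
      (by simp [hunit, star_sub, star_star, neg_sub])
    simpa [hunit] using h
  have hsa : ∀ u : A, star u = u → star (φ u) = φ u := by
    intro u hu
    have h := hstar1 u
    rw [hu, sub_self, hφ0] at h
    exact (sub_eq_zero.mp h.symm).symm
  have hdouble : ∀ u : A, φ (u + u) = φ u + φ u := by
    intro u
    have := hsmul 2 u
    rw [two_smul, two_smul] at this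
    exact this
  have hskew : ∀ u : A, star u = -u → star (φ u) = -(φ u) := by
    intro u hu
    have h := hstar1 u
    rw [hu, sub_neg_eq_add, hdouble u] at h
    -- h : φ u + φ u = φ u - star (φ u)
    calc star (φ u) = φ u - (φ u - star (φ u)) := by abel
    _ = φ u - (φ u + φ u) := by rw [← h]
    _ = -(φ u) := by abel
  -- T1
  have hT1 : ∀ u v : A, star v = v →
      φ (u*v - v*star u) = φ u * φ v - φ v * star (φ u) := by
    intro u v hv
    refine key u v ?_ ?_
    · rw [star_sub, star_mul, star_mul, star_star, hv, neg_sub]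
    · rw [star_sub, star_mul, star_mul, star_star, hsa v hv, neg_sub]
  have hLie : ∀ u v : A, star u = u → star v = v →
      φ (u*v - v*u) = φ u * φ v - φ v * φ u := by
    intro u v hu hv
    have h := hT1 u v hv
    rw [hu, hsa u hu] at h
    exact h
  have hJ : ∀ u v : A, star u = u → star v = v →
      φ (u*v + v*u) = φ u * φ v + φ v * φ u := by
    intro u v hu hv
    have h := hT1 (Complex.I • u) v hv
    have e : (Complex.I • u) * v - v * star (Complex.I • u)
        = Complex.I • (u*v + v*u) := by
      rw [star_smul, Complex.star_def, Complex.conj_I, hu, neg_smul, mul_neg,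
        sub_neg_eq_add, smul_mul_assoc, mul_smul_comm, ← smul_add]
    have e' : φ (Complex.I • u) * φ v - φ v * star (φ (Complex.I • u))
        = Complex.I • (φ u * φ v + φ v * φ u) := by
      rw [hsmul, star_smul, Complex.star_def, Complex.conj_I, hsa u hu, neg_smul, mul_neg,
        sub_neg_eq_add, smul_mul_assoc, mul_smul_comm, ← smul_add]
    rw [e, e', hsmul] at h
    exact smul_cancelA' _ Complex.I_ne_zero _ _ h
  -- A1 : additivity on sa + skew
  have hA1 : ∀ x y : A, star x = x → star y = -y → φ (x + y) = φ x + φ y := by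
    intro x y hx hy
    obtain ⟨w, hw⟩ := hbij.2 (φ x + φ y)
    have hsx : star (φ x) = φ x := hsa x hx
    have hsy : star (φ y) = -(φ y) := hskew y hy
    have h1 : φ (w - star w) = φ (y + y) := by
      rw [hstar1 w, hw, star_add, hsx, hsy, hdouble y]
      abel
    have e1 : w - star w = y + y := hinj h1
    have h3 : φ (Complex.I • w - star (Complex.I • w)) = φ (Complex.I • (x + x)) := by
      rw [hstar1 (Complex.I • w), hsmul, hsmul, hw, star_smul, Complex.star_def,
        Complex.conj_I, star_add, hsx, hsy, hdouble x, neg_smul, sub_neg_eq_add, ← smul_add]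
      congr 1
      abel
    have e2' : Complex.I • w - star (Complex.I • w) = Complex.I • (x + x) := hinj h3
    have e2 : w + star w = x + x := by
      refine smul_cancelA Complex.I Complex.I_ne_zero _ _ ?_
      rw [← e2', star_smul, Complex.star_def, Complex.conj_I, neg_smul,
        sub_neg_eq_add, ← smul_add]
    have e4 : w = x + y := by
      refine smul_cancelA 2 two_ne_zero _ _ ?_
      rw [two_smul, two_smul]
      calc w + w = (w - star w) + (w + star w) := by abel
      _ = (y + y) + (x + x) := by rw [e1, e2]
      _ = (x + y) + (x + y) := by abel
    rw [← e4, hw]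
  -- multiplicativity on sa pairs
  have hMsa : ∀ u v : A, star u = u → star v = v → φ (u * v) = φ u * φ v := by
    intro u v hu hv
    have hx : star (u*v + v*u) = u*v + v*u := by
      rw [star_add, star_mul, star_mul, hu, hv, add_comm]
    have hy : star (u*v - v*u) = -(u*v - v*u) := by
      rw [star_sub, star_mul, star_mul, hu, hv, neg_sub]
    have h := hA1 _ _ hx hy
    rw [hJ u v hu hv, hLie u v hu hv,
      show (u*v + v*u) + (u*v - v*u) = (u*v) + (u*v) from by abel, hdouble] at h
    refine smul_cancelA' 2 two_ne_zero _ _ ?_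
    rw [two_smul, two_smul, h]
    abel
  -- projections facts
  intro Pj Pk hjk a b ⟨x, hax⟩ ⟨y, hby⟩
  subst hP₂
  have hP : star Pj = Pj ∧ star Pk = Pk ∧ Pj*Pj = Pj ∧ Pk*Pk = Pk ∧ Pj*Pk = 0 ∧ Pk*Pj = 0
      ∧ Pj + Pk = 1 := by
    have hs2 : star (1 - P₁) = 1 - P₁ := by rw [star_sub, star_one, hP₁star]
    have hm2 : (1 - P₁) * (1 - P₁) = 1 - P₁ := by
      simp only [mul_sub, sub_mul, mul_one, one_mul, hP₁proj]
      abel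
    have hm12 : P₁ * (1 - P₁) = 0 := by rw [mul_sub, mul_one, hP₁proj, sub_self]
    have hm21 : (1 - P₁) * P₁ = 0 := by rw [sub_mul, one_mul, hP₁proj, sub_self]
    rcases hjk with ⟨hj, hk⟩ | ⟨hj, hk⟩ <;> subst hj <;> subst hk
    · exact ⟨hP₁star, hs2, hP₁proj, hm2, hm12, hm21, by abel⟩
    · exact ⟨hs2, hP₁star, hm2, hP₁proj, hm21, hm12, by abel⟩
  obtain ⟨hsPj, hsPk, hPj2, hPk2, hPjk, hPkj, hPsum⟩ := hP
  -- a, b corner facts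
  have hPja : Pj * a = a := by rw [hax, ← mul_assoc, ← mul_assoc, hPj2]
  have haPk : a * Pk = a := by rw [hax, mul_assoc, hPk2]
  have haPj : a * Pj = 0 := by rw [hax, mul_assoc, hPkj, mul_zero]
  have hPka : Pk * a = 0 := by rw [hax, ← mul_assoc, ← mul_assoc, hPkj, zero_mul, zero_mul]
  have hPkb : Pk * b = b := by rw [hby, ← mul_assoc, ← mul_assoc, hPk2]
  have hbPj : b * Pj = b := by rw [hby, mul_assoc, hPj2]
  have hbPk : b * Pk = 0 := by rw [hby, mul_assoc, hPjk, mul_zero]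
  have hPjb : Pj * b = 0 := by rw [hby, ← mul_assoc, ← mul_assoc, hPjk, zero_mul, zero_mul]
  -- star facts
  have hsaPj : star a * Pj = star a := by
    have := congrArg star hPja; rwa [star_mul, hsPj] at this
  have hsaPk : star a * Pk = 0 := by
    have := congrArg star hPka; rwa [star_mul, hsPk, star_zero] at this
  have hPksa : Pk * star a = star a := by
    have := congrArg star haPk; rwa [star_mul, hsPk] at this
  have hPjsa : Pj * star a = 0 := by
    have := congrArg star haPj; rwa [star_mul, hsPj, star_zero] at this
  have hsbPk : star b * Pk = star b := by
    have := congrArg star hPkb; rwa [star_mul, hsPk] at this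
  have hsbPj : star b * Pj = 0 := by
    have := congrArg star hPjb; rwa [star_mul, hsPj, star_zero] at this
  have hPjsb : Pj * star b = star b := by
    have := congrArg star hbPj; rwa [star_mul, hsPj] at this
  have hPksb : Pk * star b = 0 := by
    have := congrArg star hbPk; rwa [star_mul, hsPk, star_zero] at this
  -- cross products vanish
  have hab0 : a * star b = 0 := by
    calc a * star b = a * (Pj * star b) := by rw [hPjsb]
    _ = (a * Pj) * star b := (mul_assoc _ _ _).symm
    _ = 0 := by rw [haPj, zero_mul]
  have hsab0 : star a * b = 0 := by
    calc star a * b = star a * (Pk * b) := by rw [hPkb]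
    _ = (star a * Pk) * b := (mul_assoc _ _ _).symm
    _ = 0 := by rw [hsaPk, zero_mul]
  -- s, t
  have hssa : star (a + star a) = a + star a := by
    rw [star_add, star_star, add_comm]
  have htsa : star (b + star b) = b + star b := by
    rw [star_add, star_star, add_comm]
  have hPjs : Pj * (a + star a) = a := by rw [mul_add, hPja, hPjsa, add_zero]
  have htPj : (b + star b) * Pj = b := by rw [add_mul, hbPj, hsbPj, add_zero]
  have hst : (a + star a) * (b + star b) = a*b + star (b*a) := by
    rw [add_mul, mul_add, mul_add, hab0, hsab0, add_zero, zero_add, star_mul]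
  -- corner properties of a*b and star (b*a)
  have hp1 : (a*b) * Pj = a*b := by rw [mul_assoc, hbPj]
  have hp2 : Pj * (a*b) = a*b := by rw [← mul_assoc, hPja]
  have hp3 : (a*b) * Pk = 0 := by rw [mul_assoc, hbPk, mul_zero]
  have hp4 : Pk * (a*b) = 0 := by rw [← mul_assoc, hPka, zero_mul]
  have hba1 : Pj * (b*a) = 0 := by rw [← mul_assoc, hPjb, zero_mul]
  have hba2 : (b*a) * Pj = 0 := by rw [mul_assoc, haPj, mul_zero]
  have hba3 : Pk * (b*a) = b*a := by rw [← mul_assoc, hPkb]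
  have hba4 : (b*a) * Pk = b*a := by rw [mul_assoc, haPk]
  have hq1 : star (b*a) * Pj = 0 := by
    have := congrArg star hba1; rwa [star_mul, hsPj, star_zero] at this
  have hq2 : Pj * star (b*a) = 0 := by
    have := congrArg star hba2; rwa [star_mul, hsPj, star_zero] at this
  have hq3 : star (b*a) * Pk = star (b*a) := by
    have := congrArg star hba3; rwa [star_mul, hsPk] at this
  have hq4 : Pk * star (b*a) = star (b*a) := by
    have := congrArg star hba4; rwa [star_mul, hsPk] at this
  -- A2 for self-adjoint corner elements
  have hA2sa : ∀ p q : A, star p = p → star q = q → p * Pj = p → p * Pk = 0 →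
      q * Pj = 0 → q * Pk = q → φ (p + q) = φ p + φ q := by
    intro p q hsp hsq h1 h2 h3 h4
    obtain ⟨w, hw⟩ := hbij.2 (φ p + φ q)
    have hsw : star w = w := by
      have h5 : φ (w - star w) = 0 := by
        rw [hstar1 w, hw, star_add, hsa p hsp, hsa q hsq, sub_self]
      have h6 : w - star w = 0 := hinj (by rw [h5, hφ0])
      exact (sub_eq_zero.mp h6).symm
    have hwPj : w * Pj = p := by
      apply hinj
      rw [hMsa w Pj hsw hsPj, hw, add_mul, ← hMsa p Pj hsp hsPj, ← hMsa q Pj hsq hsPj,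
        h1, h3, hφ0, add_zero]
    have hwPk : w * Pk = q := by
      apply hinj
      rw [hMsa w Pk hsw hsPk, hw, add_mul, ← hMsa p Pk hsp hsPk, ← hMsa q Pk hsq hsPk,
        h2, h4, hφ0, zero_add]
    have hwpq : w = p + q := by
      calc w = w * 1 := (mul_one w).symm
      _ = w * (Pj + Pk) := by rw [hPsum]
      _ = w*Pj + w*Pk := mul_add _ _ _
      _ = p + q := by rw [hwPj, hwPk]
    rw [← hwpq, hw]
  -- A2 for skew corner elements
  have hA2sk : ∀ p q : A, star p = -p → star q = -q → p * Pj = p → p * Pk = 0 →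
      q * Pj = 0 → q * Pk = q → φ (p + q) = φ p + φ q := by
    intro p q hsp hsq h1 h2 h3 h4
    have hip : star (Complex.I • p) = Complex.I • p := by
      rw [star_smul, Complex.star_def, Complex.conj_I, hsp, neg_smul, smul_neg, neg_neg]
    have hiq : star (Complex.I • q) = Complex.I • q := by
      rw [star_smul, Complex.star_def, Complex.conj_I, hsq, neg_smul, smul_neg, neg_neg]
    have h := hA2sa (Complex.I • p) (Complex.I • q) hip hiq
      (by rw [smul_mul_assoc, h1]) (by rw [smul_mul_assoc, h2, smul_zero])
      (by rw [smul_mul_assoc, h3, smul_zero]) (by rw [smul_mul_assoc, h4])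
    rw [← smul_add, hsmul, hsmul, hsmul, ← smul_add] at h
    exact smul_cancelA' _ Complex.I_ne_zero _ _ h
  -- A2 general
  have h2inv : star (2⁻¹ : ℂ) = (2⁻¹ : ℂ) := by simp
  have hA2 : ∀ p q : A, p*Pj = p → Pj*p = p → p*Pk = 0 → Pk*p = 0 →
      q*Pj = 0 → Pj*q = 0 → q*Pk = q → Pk*q = q → φ (p + q) = φ p + φ q := by
    intro p q hp1' hp2' hp3' hp4' hq1' hq2' hq3' hq4'
    have hsp1 : star p * Pj = star p := by
      have := congrArg star hp2'; rwa [star_mul, hsPj] at this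
    have hsp3 : star p * Pk = 0 := by
      have := congrArg star hp4'; rwa [star_mul, hsPk, star_zero] at this
    have hsq1 : star q * Pj = 0 := by
      have := congrArg star hq2'; rwa [star_mul, hsPj, star_zero] at this
    have hsq3 : star q * Pk = star q := by
      have := congrArg star hq4'; rwa [star_mul, hsPk] at this
    set p1 := (2⁻¹:ℂ) • (p + star p) with hp1def
    set p2 := (2⁻¹:ℂ) • (p - star p) with hp2def
    set q1 := (2⁻¹:ℂ) • (q + star q) with hq1def
    set q2 := (2⁻¹:ℂ) • (q - star q) with hq2def
    have hsap1 : star p1 = p1 := by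
      rw [hp1def, star_smul, h2inv, star_add, star_star, add_comm]
    have hskp2 : star p2 = -p2 := by
      rw [hp2def, star_smul, h2inv, star_sub, star_star, ← smul_neg, neg_sub]
    have hsaq1 : star q1 = q1 := by
      rw [hq1def, star_smul, h2inv, star_add, star_star, add_comm]
    have hskq2 : star q2 = -q2 := by
      rw [hq2def, star_smul, h2inv, star_sub, star_star, ← smul_neg, neg_sub]
    have hp1Pj : p1 * Pj = p1 := by
      rw [hp1def, smul_mul_assoc, add_mul, hp1', hsp1]
    have hp1Pk : p1 * Pk = 0 := by
      rw [hp1def, smul_mul_assoc, add_mul, hp3', hsp3, add_zero, smul_zero]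
    have hp2Pj : p2 * Pj = p2 := by
      rw [hp2def, smul_mul_assoc, sub_mul, hp1', hsp1]
    have hp2Pk : p2 * Pk = 0 := by
      rw [hp2def, smul_mul_assoc, sub_mul, hp3', hsp3, sub_zero, smul_zero]
    have hq1Pj : q1 * Pj = 0 := by
      rw [hq1def, smul_mul_assoc, add_mul, hq1', hsq1, add_zero, smul_zero]
    have hq1Pk : q1 * Pk = q1 := by
      rw [hq1def, smul_mul_assoc, add_mul, hq3', hsq3]
    have hq2Pj : q2 * Pj = 0 := by
      rw [hq2def, smul_mul_assoc, sub_mul, hq1', hsq1, sub_zero, smul_zero]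
    have hq2Pk : q2 * Pk = q2 := by
      rw [hq2def, smul_mul_assoc, sub_mul, hq3', hsq3]
    have hpd : p1 + p2 = p := by
      rw [hp1def, hp2def, ← smul_add,
        show (p + star p) + (p - star p) = (2:ℂ) • p from by rw [two_smul]; abel,
        smul_smul]
      norm_num
    have hqd : q1 + q2 = q := by
      rw [hq1def, hq2def, ← smul_add,
        show (q + star q) + (q - star q) = (2:ℂ) • q from by rw [two_smul]; abel,
        smul_smul]
      norm_num
    have hsa11 : star (p1 + q1) = p1 + q1 := by rw [star_add, hsap1, hsaq1]
    have hsk22 : star (p2 + q2) = -(p2 + q2) := by rw [star_add, hskp2, hskq2, neg_add]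
    calc φ (p + q) = φ ((p1 + q1) + (p2 + q2)) := by
          rw [show (p1+q1)+(p2+q2) = (p1+p2)+(q1+q2) from by abel, hpd, hqd]
    _ = φ (p1 + q1) + φ (p2 + q2) := hA1 _ _ hsa11 hsk22
    _ = (φ p1 + φ q1) + (φ p2 + φ q2) := by
          rw [hA2sa p1 q1 hsap1 hsaq1 hp1Pj hp1Pk hq1Pj hq1Pk,
            hA2sk p2 q2 hskp2 hskq2 hp2Pj hp2Pk hq2Pj hq2Pk]
    _ = (φ p1 + φ p2) + (φ q1 + φ q2) := by abel
    _ = φ (p1 + p2) + φ (q1 + q2) := by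
          rw [hA1 p1 p2 hsap1 hskp2, hA1 q1 q2 hsaq1 hskq2]
    _ = φ p + φ q := by rw [hpd, hqd]
  -- corner sandwich lemmas
  have hcsa1 : ∀ d : A, star d = d → d * Pj = d → Pj * d = d →
      φ d * φ Pj = φ d ∧ φ Pj * φ d = φ d := by
    intro d hd h1 h2
    constructor
    · have := hMsa d Pj hd hsPj; rw [h1] at this; exact this.symm
    · have := hMsa Pj d hsPj hd; rw [h2] at this; exact this.symm
  have hcsk1 : ∀ d : A, star d = -d → d * Pj = d → Pj * d = d →
      φ d * φ Pj = φ d ∧ φ Pj * φ d = φ d := by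
    intro d hd h1 h2
    have hid : star (Complex.I • d) = Complex.I • d := by
      rw [star_smul, Complex.star_def, Complex.conj_I, hd, neg_smul, smul_neg, neg_neg]
    have h := hcsa1 (Complex.I • d) hid (by rw [smul_mul_assoc, h1])
      (by rw [mul_smul_comm, h2])
    rw [hsmul, smul_mul_assoc, mul_smul_comm] at h
    exact ⟨smul_cancelA' _ Complex.I_ne_zero _ _ h.1,
      smul_cancelA' _ Complex.I_ne_zero _ _ h.2⟩
  have hcornerJ : ∀ c : A, c * Pj = c → Pj * c = c →
      φ c * φ Pj = φ c ∧ φ Pj * φ c = φ c := by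
    intro c h1 h2
    have hsc1 : star c * Pj = star c := by
      have := congrArg star h2; rwa [star_mul, hsPj] at this
    have hsc2 : Pj * star c = star c := by
      have := congrArg star h1; rwa [star_mul, hsPj] at this
    set c1 := (2⁻¹:ℂ) • (c + star c) with hc1def
    set c2 := (2⁻¹:ℂ) • (c - star c) with hc2def
    have hsac1 : star c1 = c1 := by
      rw [hc1def, star_smul, h2inv, star_add, star_star, add_comm]
    have hskc2 : star c2 = -c2 := by
      rw [hc2def, star_smul, h2inv, star_sub, star_star, ← smul_neg, neg_sub]
    have hc1Pj : c1 * Pj = c1 := by rw [hc1def, smul_mul_assoc, add_mul, h1, hsc1]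
    have hPjc1 : Pj * c1 = c1 := by rw [hc1def, mul_smul_comm, mul_add, h2, hsc2]
    have hc2Pj : c2 * Pj = c2 := by rw [hc2def, smul_mul_assoc, sub_mul, h1, hsc1]
    have hPjc2 : Pj * c2 = c2 := by rw [hc2def, mul_smul_comm, mul_sub, h2, hsc2]
    have hcd : c1 + c2 = c := by
      rw [hc1def, hc2def, ← smul_add,
        show (c + star c) + (c - star c) = (2:ℂ) • c from by rw [two_smul]; abel,
        smul_smul]
      norm_num
    have hφc : φ c = φ c1 + φ c2 := by rw [← hcd, hA1 c1 c2 hsac1 hskc2]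
    have e1 := hcsa1 c1 hsac1 hc1Pj hPjc1
    have e2 := hcsk1 c2 hskc2 hc2Pj hPjc2
    constructor
    · rw [hφc, add_mul, e1.1, e2.1]
    · rw [hφc, mul_add, e1.2, e2.2]
  have hcorner0 : ∀ c : A, c * Pj = 0 → Pj * c = 0 → φ c * φ Pj = 0 := by
    intro c h1 h2
    have hsc1 : star c * Pj = 0 := by
      have := congrArg star h2; rwa [star_mul, hsPj, star_zero] at this
    set c1 := (2⁻¹:ℂ) • (c + star c) with hc1def
    set c2 := (2⁻¹:ℂ) • (c - star c) with hc2def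
    have hsac1 : star c1 = c1 := by
      rw [hc1def, star_smul, h2inv, star_add, star_star, add_comm]
    have hskc2 : star c2 = -c2 := by
      rw [hc2def, star_smul, h2inv, star_sub, star_star, ← smul_neg, neg_sub]
    have hc1Pj : c1 * Pj = 0 := by
      rw [hc1def, smul_mul_assoc, add_mul, h1, hsc1, add_zero, smul_zero]
    have hc2Pj : c2 * Pj = 0 := by
      rw [hc2def, smul_mul_assoc, sub_mul, h1, hsc1, sub_zero, smul_zero]
    have hcd : c1 + c2 = c := by
      rw [hc1def, hc2def, ← smul_add,
        show (c + star c) + (c - star c) = (2:ℂ) • c from by rw [two_smul]; abel,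
        smul_smul]
      norm_num
    have hφc : φ c = φ c1 + φ c2 := by rw [← hcd, hA1 c1 c2 hsac1 hskc2]
    have e1 : φ c1 * φ Pj = 0 := by
      have := hMsa c1 Pj hsac1 hsPj; rw [hc1Pj, hφ0] at this; exact this.symm
    have e2 : φ c2 * φ Pj = 0 := by
      have hid : star (Complex.I • c2) = Complex.I • c2 := by
        rw [star_smul, Complex.star_def, Complex.conj_I, hskc2, neg_smul, smul_neg, neg_neg]
      have h := hMsa (Complex.I • c2) Pj hid hsPj
      rw [smul_mul_assoc, hc2Pj, smul_zero, hφ0, hsmul, smul_mul_assoc] at h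
      refine smul_cancelA' _ Complex.I_ne_zero _ _ ?_
      rw [← h, smul_zero]
    rw [hφc, add_mul, e1, e2, add_zero]
  -- final assembly
  have hfa : φ a = φ Pj * φ (a + star a) := by
    have := hMsa Pj (a + star a) hsPj hssa
    rw [hPjs] at this
    exact this
  have hfb : φ b = φ (b + star b) * φ Pj := by
    have := hMsa (b + star b) Pj htsa hsPj
    rw [htPj] at this
    exact this
  have hstf : φ (a + star a) * φ (b + star b) = φ (a*b) + φ (star (b*a)) := by
    have h := hMsa (a + star a) (b + star b) hssa htsa
    rw [hst] at h
    rw [← h, hA2 (a*b) (star (b*a)) hp1 hp2 hp3 hp4 hq1 hq2 hq3 hq4]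
  have e1 := hcornerJ (a*b) hp1 hp2
  calc φ (a * b) = φ Pj * (φ (a*b) + 0) := by rw [add_zero, e1.2]
  _ = φ Pj * (φ (a*b) * φ Pj + φ (star (b*a)) * φ Pj) := by
        rw [e1.1, hcorner0 (star (b*a)) hq1 hq2]
  _ = φ Pj * ((φ (a*b) + φ (star (b*a))) * φ Pj) := by rw [add_mul]
  _ = φ Pj * ((φ (a + star a) * φ (b + star b)) * φ Pj) := by rw [hstf]
  _ = (φ Pj * φ (a + star a)) * (φ (b + star b) * φ Pj) := by
        rw [mul_assoc, mul_assoc]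
  _ = φ a * φ b := by rw [← hfa, ← hfb]
end

section
/- Let A and A' be unital C*-algebras, P₁ a nontrivial symmetric projection in A, P₂ = I_A − P₁, and suppose A satisfies (♠): for j ∈ {1,2}, P_j A X = {0} implies X = 0. Fix an integer n ≥ 2 and let φ: A → A' be a bijective map with φ(I_A) = I_{A'}, φ(λA) = λφ(A) for all λ ∈ ℂ, satisfying (♣): for j ∈ {1,2}, φ(P_j) A' Y = {0} implies Y = 0. Then φ is a multiplicative *-Lie n-map (i.e., φ(p_{n*}(x₁,…,x_n)) = p_{n*}(φ(x₁),…,φ(x_n)) for all x₁,…,x_n ∈ A) if and only if φ is a *-isomorphism (additive, multiplicative, and star-preserving). -/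
set_option linter.unusedSectionVars false
set_option maxHeartbeats 1000000



variable {A A' : Type*}
  [NormedRing A] [StarRing A] [CStarRing A] [NormedAlgebra ℂ A]
  [CompleteSpace A] [StarModule ℂ A]
  [NormedRing A'] [StarRing A'] [CStarRing A'] [NormedAlgebra ℂ A']
  [CompleteSpace A'] [StarModule ℂ A']

/-- `pvec m x = p_{(m+1)*}(x 0, ..., x m)`. -/
def pvec {R : Type*} [Ring R] [StarRing R] : (m : ℕ) → (Fin (m + 1) → R) → R
  | 0, x => x 0
  | m + 1, x => starLie (pvec m (fun i => x i.castSucc)) (x (Fin.last (m + 1)))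

section AuxRing
variable {R : Type*} [Ring R]

private lemma smul_cancel {M : Type*} [AddCommGroup M] [Module ℂ M] (c : ℂ) (hc : c ≠ 0)
    {z w : M} (h : c • z = c • w) : z = w := by
  have := congrArg (fun u => c⁻¹ • u) h
  simpa [smul_smul, inv_mul_cancel₀ hc] using this

private lemma shape_left {e f a : R} (hee : e*e = e) (ha : e*a*f = a) : e*a = a := by
  have h : e*(e*a*f) = e*a*f := by rw [← mul_assoc, ← mul_assoc, hee]
  rw [ha] at h; exact h

private lemma shape_right {e f a : R} (hff : f*f = f) (ha : e*a*f = a) : a*f = a := by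
  have h : (e*a*f)*f = e*a*f := by rw [mul_assoc (e*a) f f, hff]
  rw [ha] at h; exact h

private lemma shape_lzero {e f g a : R} (hge : g*e = 0) (ha : e*a*f = a) : g*a = 0 := by
  have h : g*(e*a*f) = 0 := by rw [← mul_assoc, ← mul_assoc, hge, zero_mul, zero_mul]
  rw [ha] at h; exact h

private lemma shape_rzero {e f g a : R} (hfg : f*g = 0) (ha : e*a*f = a) : a*g = 0 := by
  have h : (e*a*f)*g = 0 := by rw [mul_assoc (e*a) f g, hfg, mul_zero]
  rw [ha] at h; exact h

private lemma shape_mul {e f g a b : R} (hee : e*e = e) (hgg : g*g = g)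
    (ha : e*a*f = a) (hb : f*b*g = b) : e*(a*b)*g = a*b := by
  have h1 : e*a = a := shape_left hee ha
  have h2 : b*g = b := shape_right hgg hb
  rw [← mul_assoc, h1, mul_assoc, h2]

private lemma shape_mul_zero {e f g h a b : R} (hfg : f*g = 0)
    (ha : e*a*f = a) (hb : g*b*h = b) : a*b = 0 :=
  calc a*b = (e*a*f)*(g*b*h) := by rw [ha, hb]
    _ = e*a*(f*g)*(b*h) := by noncomm_ring
    _ = 0 := by rw [hfg, mul_zero, zero_mul]

private lemma shape_neg {e f a : R} (ha : e*a*f = a) : e*(-a)*f = -a := by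
  rw [mul_neg, neg_mul, ha]

private lemma shape_add {e f a b : R} (ha : e*a*f = a) (hb : e*b*f = b) :
    e*(a+b)*f = a+b := by
  rw [mul_add, add_mul, ha, hb]

private lemma shape_zero {e f : R} : e*(0:R)*f = 0 := by rw [mul_zero, zero_mul]

private lemma shape_smul {M : Type*} [Ring M] [Algebra ℂ M] {e f a : M} (c : ℂ)
    (ha : e*a*f = a) : e*(c • a)*f = c • a := by
  rw [mul_smul_comm, smul_mul_assoc, ha]

end AuxRing

section AuxStar
variable {R : Type*} [Ring R] [StarRing R]

private lemma shape_star {e f a : R} (hse : star e = e) (hsf : star f = f)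
    (ha : e*a*f = a) : f*(star a)*e = star a := by
  conv_rhs => rw [← ha]
  rw [star_mul, star_mul, hse, hsf, mul_assoc]

private lemma pvec_pattern2 (a b ξ : R) :
    ∀ m : ℕ, pvec (m+1) (fun i : Fin (m+2) =>
        if (i : ℕ) = 0 then a else if (i : ℕ) = 1 then b else ξ)
      = (fun z => starLie z ξ)^[m] (starLie a b)
  | 0 => by
      show starLie _ _ = _
      norm_num [pvec, Fin.val_last]
  | (m+1) => by
      show starLie (pvec (m+1) _) _ = _
      have h1 : (fun i : Fin (m+2) =>
          (fun j : Fin (m+3) => if (j:ℕ) = 0 then a else if (j:ℕ) = 1 then b else ξ) i.castSucc)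
          = fun i : Fin (m+2) => if (i:ℕ) = 0 then a else if (i:ℕ) = 1 then b else ξ := by
        funext i; simp [Fin.coe_castSucc]
      rw [h1, pvec_pattern2 a b ξ m]
      have h2 : ((Fin.last (m+2) : Fin (m+3)) : ℕ) = m+2 := Fin.val_last _
      rw [Function.iterate_succ_apply']
      norm_num [h2]

private lemma pvec_pattern3 (s c ξ : R) (k : ℕ) :
    pvec (k+2) (fun i : Fin (k+3) =>
        if (i:ℕ) = k+2 then c else if (i:ℕ) = 0 then s else if (i:ℕ) = 1 then 1 else ξ)
      = starLie ((fun z => starLie z ξ)^[k] (starLie s 1)) c := by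
  show starLie (pvec (k+1) _) _ = _
  have h1 : (fun i : Fin (k+2) =>
      (fun j : Fin (k+3) => if (j:ℕ) = k+2 then c else if (j:ℕ) = 0 then s
        else if (j:ℕ) = 1 then 1 else ξ) i.castSucc)
      = fun i : Fin (k+2) => if (i:ℕ) = 0 then s else if (i:ℕ) = 1 then (1:R) else ξ := by
    funext i
    simp only [Fin.coe_castSucc]
    rw [if_neg (by omega : ¬ (i:ℕ) = k+2)]
  rw [h1, pvec_pattern2 s 1 ξ k]
  have h2 : ((Fin.last (k+2) : Fin (k+3)) : ℕ) = k+2 := Fin.val_last _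
  norm_num [h2]

end AuxStar

section AuxAlg
variable {R : Type*} [Ring R] [Algebra ℂ R] [StarRing R] [StarModule ℂ R]

private lemma starLie_half (z : R) (hz : star z = -z) :
    starLie z (((2:ℂ)⁻¹) • (1:R)) = z := by
  rw [starLie, hz, mul_smul_comm, smul_mul_assoc, mul_one, one_mul, smul_neg, sub_neg_eq_add,
    ← add_smul]
  norm_num

private lemma iter_half_fixed (z : R) (hz : star z = -z) (n : ℕ) :
    (fun y => starLie y (((2:ℂ)⁻¹) • (1:R)))^[n] z = z := by
  induction n with
  | zero => rfl
  | succ n ih => rw [Function.iterate_succ_apply', ih]; exact starLie_half z hz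

private lemma starLie_one (x : R) : starLie x 1 = x - star x := by simp [starLie]

private lemma skew_sub_star (x : R) : star (x - star x) = -(x - star x) := by simp

private lemma skew_starLie_sa (x h : R) (hh : star h = h) :
    star (starLie x h) = - starLie x h := by
  simp only [starLie, star_sub, star_mul, star_star, hh]
  noncomm_ring

end AuxAlg

theorem stmt17
    (P₁ : A) (hP₁proj : P₁ * P₁ = P₁) (hP₁star : star P₁ = P₁)
    (hP₁ne0 : P₁ ≠ 0) (hP₁ne1 : P₁ ≠ 1)
    (P₂ : A) (hP₂ : P₂ = 1 - P₁)
    (hspade : ∀ Pj ∈ ({P₁, P₂} : Set A), ∀ X : A, (∀ Y : A, Pj * Y * X = 0) → X = 0)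
    (m : ℕ)
    (φ : A → A') (hbij : Function.Bijective φ) (hunit : φ 1 = 1)
    (hsmul : ∀ (c : ℂ) (a : A), φ (c • a) = c • φ a)
    (hclub : ∀ Pj ∈ ({P₁, P₂} : Set A), ∀ Y : A', (∀ Z : A', φ Pj * Z * Y = 0) → Y = 0)
    :
    (∀ x : Fin (m + 2) → A, φ (pvec (m + 1) x) = pvec (m + 1) (fun i => φ (x i))) ↔
      ((∀ a b : A, φ (a + b) = φ a + φ b) ∧ (∀ a b : A, φ (a * b) = φ a * φ b) ∧
        (∀ a : A, φ (star a) = star (φ a))) := by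
  constructor
  · -- FORWARD
    intro hpv
    have hinj := hbij.1
    have hsurj := hbij.2
    have h0 : φ 0 = 0 := by simpa using hsmul 0 0
    have hneg : ∀ x : A, φ (-x) = - φ x := by intro x; simpa using hsmul (-1) x
    have hxi : φ (((2:ℂ)⁻¹) • (1:A)) = ((2:ℂ)⁻¹) • (1:A') := by rw [hsmul, hunit]
    -- projection algebra
    have hEE : P₁ * P₁ = P₁ := hP₁proj
    have hFF : P₂ * P₂ = P₂ := by
      rw [hP₂]; simp [sub_mul, mul_sub, hP₁proj]
    have hEF : P₁ * P₂ = 0 := by rw [hP₂, mul_sub, mul_one, hP₁proj, sub_self]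
    have hFE : P₂ * P₁ = 0 := by rw [hP₂, sub_mul, one_mul, hP₁proj, sub_self]
    have hE1 : P₁ + P₂ = 1 := by rw [hP₂]; abel
    have hsF : star P₂ = P₂ := by rw [hP₂, star_sub, star_one, hP₁star]
    -- toolkit
    have hP2 : ∀ x : A, φ (x - star x) = φ x - star (φ x) := by
      intro x
      have h := hpv (fun i => if (i:ℕ) = 0 then x else if (i:ℕ) = 1 then 1
        else ((2:ℂ)⁻¹) • (1:A))
      rw [pvec_pattern2] at h
      have hfn : (fun i : Fin (m+2) => φ (if (i:ℕ) = 0 then x else if (i:ℕ) = 1 then 1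
          else ((2:ℂ)⁻¹) • (1:A)))
          = fun i : Fin (m+2) => if (i:ℕ) = 0 then φ x else if (i:ℕ) = 1 then 1
            else ((2:ℂ)⁻¹) • (1:A') := by
        funext i; split_ifs <;> simp [hunit, hxi]
      rw [hfn, pvec_pattern2] at h
      rw [starLie_one, starLie_one, iter_half_fixed _ (skew_sub_star x),
        iter_half_fixed _ (skew_sub_star (φ x))] at h
      exact h
    have hsa : ∀ h : A, star h = h → star (φ h) = φ h := by
      intro h hh
      have h1 := hP2 h
      rw [hh, sub_self, h0] at h1
      exact (sub_eq_zero.mp h1.symm).symm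
    have hskew : ∀ s : A, star s = -s → star (φ s) = - φ s := by
      intro s hs
      have h := hP2 s
      rw [hs, sub_neg_eq_add, ← two_smul ℂ s, hsmul, two_smul ℂ (φ s)] at h
      have h2 : star (φ s) = φ s - (φ s - star (φ s)) := by abel
      rw [← h] at h2
      rw [h2]; abel
    have hP4m : ∀ x h : A, star h = h →
        φ (x*h - h*star x) = φ x * φ h - φ h * star (φ x) := by
      intro x h hh
      have hp := hpv (fun i => if (i:ℕ) = 0 then x else if (i:ℕ) = 1 then h
        else ((2:ℂ)⁻¹) • (1:A))
      rw [pvec_pattern2] at hp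
      have hfn : (fun i : Fin (m+2) => φ (if (i:ℕ) = 0 then x else if (i:ℕ) = 1 then h
          else ((2:ℂ)⁻¹) • (1:A)))
          = fun i : Fin (m+2) => if (i:ℕ) = 0 then φ x else if (i:ℕ) = 1 then φ h
            else ((2:ℂ)⁻¹) • (1:A') := by
        funext i; split_ifs <;> simp [hxi]
      rw [hfn, pvec_pattern2] at hp
      rw [iter_half_fixed _ (skew_starLie_sa x h hh),
        iter_half_fixed _ (skew_starLie_sa (φ x) (φ h) (hsa h hh))] at hp
      rw [starLie, starLie] at hp
      exact hp
    have hP4p : ∀ x h : A, star h = h →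
        φ (x*h + h*star x) = φ x * φ h + φ h * star (φ x) := by
      intro x h hh
      have hp := hP4m (Complex.I • x) h hh
      have e0 : star (Complex.I • x) = (-Complex.I) • star x := by
        simp [star_smul, Complex.star_def, Complex.conj_I]
      have e1 : Complex.I • x * h - h * ((-Complex.I) • star x)
          = Complex.I • (x*h + h*star x) := by
        rw [smul_mul_assoc, mul_smul_comm, neg_smul, sub_neg_eq_add, smul_add]
      rw [e0, e1, hsmul, hsmul] at hp
      have e2 : star (Complex.I • φ x) = (-Complex.I) • star (φ x) := by
        simp [star_smul, Complex.star_def, Complex.conj_I]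
      rw [e2] at hp
      have e3 : Complex.I • φ x * φ h - φ h * ((-Complex.I) • star (φ x))
          = Complex.I • (φ x * φ h + φ h * star (φ x)) := by
        rw [smul_mul_assoc, mul_smul_comm, neg_smul, sub_neg_eq_add, smul_add]
      rw [e3] at hp
      exact smul_cancel Complex.I Complex.I_ne_zero hp
    have hP3 : ∀ s b : A, star s = -s → φ (s*b + b*s) = φ s * φ b + φ b * φ s := by
      intro s b hs
      rcases m with _ | k
      · have hp := hpv (fun i : Fin 2 => if (i:ℕ) = 0 then s else if (i:ℕ) = 1 then b
          else ((2:ℂ)⁻¹) • (1:A))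
        rw [pvec_pattern2] at hp
        have hfn : (fun i : Fin 2 => φ (if (i:ℕ) = 0 then s else if (i:ℕ) = 1 then b
            else ((2:ℂ)⁻¹) • (1:A)))
            = fun i : Fin 2 => if (i:ℕ) = 0 then φ s else if (i:ℕ) = 1 then φ b
              else ((2:ℂ)⁻¹) • (1:A') := by
          funext i; split_ifs <;> simp [hxi]
        rw [hfn, pvec_pattern2] at hp
        simp only [Function.iterate_zero, id_eq] at hp
        rw [starLie, starLie, hs, hskew s hs] at hp
        simpa [mul_neg, sub_neg_eq_add] using hp
      · have hp := hpv (fun i : Fin (k+3) => if (i:ℕ) = k+2 then b else if (i:ℕ) = 0 then s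
          else if (i:ℕ) = 1 then 1 else ((2:ℂ)⁻¹) • (1:A))
        rw [pvec_pattern3] at hp
        have hfn : (fun i : Fin (k+3) => φ (if (i:ℕ) = k+2 then b else if (i:ℕ) = 0 then s
            else if (i:ℕ) = 1 then 1 else ((2:ℂ)⁻¹) • (1:A)))
            = fun i : Fin (k+3) => if (i:ℕ) = k+2 then φ b else if (i:ℕ) = 0 then φ s
              else if (i:ℕ) = 1 then 1 else ((2:ℂ)⁻¹) • (1:A') := by
          funext i; split_ifs <;> simp [hunit, hxi]
        rw [hfn, pvec_pattern3] at hp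
        rw [starLie_one, starLie_one, iter_half_fixed _ (skew_sub_star s),
          iter_half_fixed _ (skew_sub_star (φ s))] at hp
        rw [hs, sub_neg_eq_add, hskew s hs, sub_neg_eq_add] at hp
        rw [starLie, starLie] at hp
        have es : star (s + s) = -(s+s) := by rw [star_add, hs]; abel
        have es' : star (φ s + φ s) = -(φ s + φ s) := by rw [star_add, hskew s hs]; abel
        rw [es, es', mul_neg, sub_neg_eq_add, mul_neg, sub_neg_eq_add] at hp
        have el : (s+s)*b + b*(s+s) = (2:ℂ) • (s*b + b*s) := by
          rw [two_smul]; noncomm_ring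
        have el' : (φ s+φ s)*(φ b) + (φ b)*(φ s+φ s)
            = (2:ℂ) • (φ s*φ b + φ b*φ s) := by
          rw [two_smul]; noncomm_ring
        rw [el, el', hsmul] at hp
        exact smul_cancel 2 two_ne_zero hp
    -- right-assoc helpers
    have hEEx : ∀ z : A, P₁*(P₁*z) = P₁*z := fun z => by rw [← mul_assoc, hEE]
    have hEFx : ∀ z : A, P₁*(P₂*z) = 0 := fun z => by rw [← mul_assoc, hEF, zero_mul]
    have hFEx : ∀ z : A, P₂*(P₁*z) = 0 := fun z => by rw [← mul_assoc, hFE, zero_mul]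
    have hFFx : ∀ z : A, P₂*(P₂*z) = P₂*z := fun z => by rw [← mul_assoc, hFF]
    have hdecomp : ∀ z : A, P₁*z*P₁ + P₁*z*P₂ + P₂*z*P₁ + P₂*z*P₂ = z := by
      intro z
      have h1 : (P₁ + P₂)*z*(P₁+P₂) = z := by rw [hE1, one_mul, mul_one]
      conv_rhs => rw [← h1]
      simp only [add_mul, mul_add]
      abel
    have half_cancelA : ∀ z : A, z + z = 0 → z = 0 := fun z h =>
      smul_cancel 2 two_ne_zero (by rw [two_smul, smul_zero]; exact h)
    have two_cancelA : ∀ z w : A, z + z = w + w → z = w := fun z w h =>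
      smul_cancel 2 two_ne_zero (by rw [two_smul, two_smul]; exact h)
    have hsI : star (Complex.I • (P₁ - P₂)) = -(Complex.I • (P₁ - P₂)) := by
      simp [star_smul, Complex.star_def, Complex.conj_I, star_sub, hP₁star, hsF]
    have hsIE : star (Complex.I • P₁) = -(Complex.I • P₁) := by
      simp [star_smul, Complex.star_def, Complex.conj_I, hP₁star]
    have hsIF : star (Complex.I • P₂) = -(Complex.I • P₂) := by
      simp [star_smul, Complex.star_def, Complex.conj_I, hsF]
    -- C2 : additivity on A₁₂ + A₂₁
    have C2 : ∀ a b : A, P₁*a*P₂ = a → P₂*b*P₁ = b → φ (a + b) = φ a + φ b := by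
      intro a b ha hb
      obtain ⟨t, ht⟩ := hsurj (φ a + φ b)
      have haL := shape_left hEE ha
      have haR := shape_right hFF ha
      have haL0 := shape_lzero hFE ha
      have haR0 := shape_rzero hFE ha
      have hbL := shape_left hFF hb
      have hbR := shape_right hEE hb
      have hbL0 := shape_lzero hEF hb
      have hbR0 := shape_rzero hEF hb
      have hsta := shape_star hP₁star hsF ha
      have hstb := shape_star hsF hP₁star hb
      -- step 1 : diagonal of t is 0
      have key1 : φ ((Complex.I • (P₁ - P₂))*t + t*(Complex.I • (P₁ - P₂)))
          = φ ((Complex.I • (P₁ - P₂))*a + a*(Complex.I • (P₁ - P₂)))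
            + φ ((Complex.I • (P₁ - P₂))*b + b*(Complex.I • (P₁ - P₂))) := by
        rw [hP3 _ t hsI, hP3 _ a hsI, hP3 _ b hsI, ht]; noncomm_ring
      have hva : (Complex.I • (P₁ - P₂))*a + a*(Complex.I • (P₁ - P₂)) = 0 := by
        have h2 : (P₁ - P₂)*a + a*(P₁ - P₂) = 0 := by
          rw [sub_mul, mul_sub, haL, haL0, haR, haR0]; abel
        rw [smul_mul_assoc, mul_smul_comm, ← smul_add, h2, smul_zero]
      have hvb : (Complex.I • (P₁ - P₂))*b + b*(Complex.I • (P₁ - P₂)) = 0 := by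
        have h2 : (P₁ - P₂)*b + b*(P₁ - P₂) = 0 := by
          rw [sub_mul, mul_sub, hbL0, hbL, hbR0, hbR]; abel
        rw [smul_mul_assoc, mul_smul_comm, ← smul_add, h2, smul_zero]
      rw [hva, hvb, h0, add_zero] at key1
      have e2 : (P₁ - P₂)*t + t*(P₁ - P₂) = 0 := by
        have h3 := hinj (key1.trans h0.symm)
        rw [smul_mul_assoc, mul_smul_comm, ← smul_add] at h3
        exact smul_cancel _ Complex.I_ne_zero (h3.trans (smul_zero _).symm)
      have d11 : P₁*t*P₁ = 0 := by
        have h1 := congrArg (fun z => P₁*z*P₁) e2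
        simp only [mul_add, add_mul, sub_mul, mul_sub, mul_neg, neg_mul, mul_assoc, hEE, hEF, hFE, hFF, hEEx, hEFx, hFEx, hFFx, mul_zero, zero_mul, mul_one, one_mul, sub_zero, zero_sub, neg_neg, neg_zero] at h1
        rw [mul_assoc]
        exact half_cancelA _ h1
      have d22 : P₂*t*P₂ = 0 := by
        have h1 := congrArg (fun z => P₂*z*P₂) e2
        simp only [mul_add, add_mul, sub_mul, mul_sub, mul_neg, neg_mul, mul_assoc, hEE, hEF, hFE, hFF, hEEx, hEFx, hFEx, hFFx, mul_zero, zero_mul, mul_one, one_mul, sub_zero, zero_sub, neg_neg, neg_zero] at h1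
        rw [mul_assoc]
        have h2 : P₂*(t*P₂) + P₂*(t*P₂) = 0 := by
          have h3 := congrArg (fun z : A => -z) h1
          simp only [neg_add, neg_neg, neg_zero] at h3
          exact h3
        exact half_cancelA _ h2
      -- step 2 : P₂ t P₁ component
      have key2 : φ (t*P₁ - P₁*star t) = φ (a*P₁ - P₁*star a) + φ (b*P₁ - P₁*star b) := by
        rw [hP4m t P₁ hP₁star, hP4m a P₁ hP₁star, hP4m b P₁ hP₁star, ht, star_add]
        noncomm_ring
      have ea : a*P₁ - P₁*star a = 0 := by
        rw [haR0, shape_lzero hEF hsta]; exact sub_self 0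
      have eb : b*P₁ - P₁*star b = b - star b := by
        rw [hbR, shape_left hEE hstb]
      rw [ea, eb, h0, zero_add] at key2
      have e3 := hinj key2
      have d21 : P₂*t*P₁ = b := by
        have h1 := congrArg (fun z => P₂*z*P₁) e3
        simp only [mul_sub, sub_mul, mul_assoc, hEE, hEF, hFE, hFF, hEEx, hEFx, hFEx, hFFx,
          mul_zero, zero_mul, sub_zero, zero_sub] at h1
        rw [mul_assoc]
        rw [shape_rzero hFE hstb, mul_zero, sub_zero] at h1
        rw [h1]
        rw [← mul_assoc, hbL, hbR]
      -- step 3 : P₁ t P₂ component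
      have key3 : φ (t*P₂ - P₂*star t) = φ (a*P₂ - P₂*star a) + φ (b*P₂ - P₂*star b) := by
        rw [hP4m t P₂ hsF, hP4m a P₂ hsF, hP4m b P₂ hsF, ht, star_add]
        noncomm_ring
      have ea3 : a*P₂ - P₂*star a = a - star a := by
        rw [haR, shape_left hFF hsta]
      have eb3 : b*P₂ - P₂*star b = 0 := by
        rw [hbR0, shape_lzero hFE hstb]; exact sub_self 0
      rw [ea3, eb3, h0, add_zero] at key3
      have e4 := hinj key3
      have d12 : P₁*t*P₂ = a := by
        have h1 := congrArg (fun z => P₁*z*P₂) e4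
        simp only [mul_sub, sub_mul, mul_assoc, hEE, hEF, hFE, hFF, hEEx, hEFx, hFEx, hFFx,
          mul_zero, zero_mul, sub_zero, zero_sub] at h1
        rw [mul_assoc]
        rw [shape_rzero hEF hsta, mul_zero, sub_zero] at h1
        rw [h1]
        rw [← mul_assoc, haL, haR]
      have hde : t = a + b := by
        have hdt := hdecomp t
        rw [d11, d12, d21, d22] at hdt
        rw [← hdt]; abel
      exact hde ▸ ht
    -- C4a : A₁₁ + A₁₂ + A₂₁
    have C4a : ∀ a b c : A, P₁*a*P₁ = a → P₁*b*P₂ = b → P₂*c*P₁ = c →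
        φ (a + b + c) = φ a + φ b + φ c := by
      intro a b c ha hb hc
      obtain ⟨t, ht⟩ := hsurj (φ a + φ b + φ c)
      have haL := shape_left hEE ha
      have haR := shape_right hEE ha
      have haL0 := shape_lzero hFE ha
      have haR0 := shape_rzero hEF ha
      have hbL := shape_left hEE hb
      have hbR := shape_right hFF hb
      have hbL0 := shape_lzero hFE hb
      have hbR0 := shape_rzero hFE hb
      have hcL := shape_left hFF hc
      have hcR := shape_right hEE hc
      have hcL0 := shape_lzero hEF hc
      have hcR0 := shape_rzero hEF hc
      -- word 1 : s = I • P₂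
      have key1 : φ ((Complex.I • P₂)*t + t*(Complex.I • P₂))
          = φ ((Complex.I • P₂)*a + a*(Complex.I • P₂))
            + φ ((Complex.I • P₂)*b + b*(Complex.I • P₂))
            + φ ((Complex.I • P₂)*c + c*(Complex.I • P₂)) := by
        rw [hP3 _ t hsIF, hP3 _ a hsIF, hP3 _ b hsIF, hP3 _ c hsIF, ht]; noncomm_ring
      have hva : (Complex.I • P₂)*a + a*(Complex.I • P₂) = 0 := by
        have h2 : P₂*a + a*P₂ = 0 := by rw [haL0, haR0]; exact add_zero 0
        rw [smul_mul_assoc, mul_smul_comm, ← smul_add, h2, smul_zero]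
      have hvb : (Complex.I • P₂)*b + b*(Complex.I • P₂) = Complex.I • b := by
        have h2 : P₂*b + b*P₂ = b := by rw [hbL0, hbR, zero_add]
        rw [smul_mul_assoc, mul_smul_comm, ← smul_add, h2]
      have hvc : (Complex.I • P₂)*c + c*(Complex.I • P₂) = Complex.I • c := by
        have h2 : P₂*c + c*P₂ = c := by rw [hcL, hcR0, add_zero]
        rw [smul_mul_assoc, mul_smul_comm, ← smul_add, h2]
      rw [hva, hvb, hvc, h0, zero_add, hsmul, hsmul, ← smul_add, ← C2 b c hb hc,
        ← hsmul] at key1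
      have e2 : P₂*t + t*P₂ = b + c := by
        have h3 := hinj key1
        rw [smul_mul_assoc, mul_smul_comm, ← smul_add] at h3
        exact smul_cancel _ Complex.I_ne_zero h3
      have d12 : P₁*t*P₂ = b := by
        have h1 := congrArg (fun z => P₁*z*P₂) e2
        simp only [mul_add, add_mul, sub_mul, mul_sub, mul_neg, neg_mul, mul_assoc, hEE, hEF,
          hFE, hFF, hEEx, hEFx, hFEx, hFFx, haL, haR, haL0, haR0, hbL, hbR, hbL0, hbR0,
          hcL, hcR, hcL0, hcR0, mul_zero, zero_mul, mul_one, one_mul, sub_zero, zero_sub,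
          neg_neg, neg_zero, add_zero, zero_add] at h1
        rw [mul_assoc]; exact h1
      have d21 : P₂*t*P₁ = c := by
        have h1 := congrArg (fun z => P₂*z*P₁) e2
        simp only [mul_add, add_mul, sub_mul, mul_sub, mul_neg, neg_mul, mul_assoc, hEE, hEF,
          hFE, hFF, hEEx, hEFx, hFEx, hFFx, haL, haR, haL0, haR0, hbL, hbR, hbL0, hbR0,
          hcL, hcR, hcL0, hcR0, mul_zero, zero_mul, mul_one, one_mul, sub_zero, zero_sub,
          neg_neg, neg_zero, add_zero, zero_add] at h1
        rw [mul_assoc]; exact h1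
      have d22 : P₂*t*P₂ = 0 := by
        have h1 := congrArg (fun z => P₂*z*P₂) e2
        simp only [mul_add, add_mul, sub_mul, mul_sub, mul_neg, neg_mul, mul_assoc, hEE, hEF,
          hFE, hFF, hEEx, hEFx, hFEx, hFFx, haL, haR, haL0, haR0, hbL, hbR, hbL0, hbR0,
          hcL, hcR, hcL0, hcR0, mul_zero, zero_mul, mul_one, one_mul, sub_zero, zero_sub,
          neg_neg, neg_zero, add_zero, zero_add] at h1
        rw [mul_assoc]; exact half_cancelA _ h1
      -- word 2 : s = I • (P₁ - P₂)
      have key2 : φ ((Complex.I • (P₁ - P₂))*t + t*(Complex.I • (P₁ - P₂)))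
          = φ ((Complex.I • (P₁ - P₂))*a + a*(Complex.I • (P₁ - P₂)))
            + φ ((Complex.I • (P₁ - P₂))*b + b*(Complex.I • (P₁ - P₂)))
            + φ ((Complex.I • (P₁ - P₂))*c + c*(Complex.I • (P₁ - P₂))) := by
        rw [hP3 _ t hsI, hP3 _ a hsI, hP3 _ b hsI, hP3 _ c hsI, ht]; noncomm_ring
      have hwa : (Complex.I • (P₁ - P₂))*a + a*(Complex.I • (P₁ - P₂))
          = Complex.I • (a + a) := by
        have h2 : (P₁-P₂)*a + a*(P₁-P₂) = a + a := by
          rw [sub_mul, mul_sub, haL, haL0, haR, haR0]; abel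
        rw [smul_mul_assoc, mul_smul_comm, ← smul_add, h2]
      have hwb : (Complex.I • (P₁ - P₂))*b + b*(Complex.I • (P₁ - P₂)) = 0 := by
        have h2 : (P₁-P₂)*b + b*(P₁-P₂) = 0 := by
          rw [sub_mul, mul_sub, hbL, hbL0, hbR, hbR0]; abel
        rw [smul_mul_assoc, mul_smul_comm, ← smul_add, h2, smul_zero]
      have hwc : (Complex.I • (P₁ - P₂))*c + c*(Complex.I • (P₁ - P₂)) = 0 := by
        have h2 : (P₁-P₂)*c + c*(P₁-P₂) = 0 := by
          rw [sub_mul, mul_sub, hcL, hcL0, hcR, hcR0]; abel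
        rw [smul_mul_assoc, mul_smul_comm, ← smul_add, h2, smul_zero]
      rw [hwa, hwb, hwc, h0, add_zero, add_zero] at key2
      have e3 : (P₁-P₂)*t + t*(P₁-P₂) = a + a := by
        have h3 := hinj key2
        rw [smul_mul_assoc, mul_smul_comm, ← smul_add] at h3
        exact smul_cancel _ Complex.I_ne_zero h3
      have d11 : P₁*t*P₁ = a := by
        have h1 := congrArg (fun z => P₁*z*P₁) e3
        simp only [mul_add, add_mul, sub_mul, mul_sub, mul_neg, neg_mul, mul_assoc, hEE, hEF,
          hFE, hFF, hEEx, hEFx, hFEx, hFFx, haL, haR, haL0, haR0, hbL, hbR, hbL0, hbR0,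
          hcL, hcR, hcL0, hcR0, mul_zero, zero_mul, mul_one, one_mul, sub_zero, zero_sub,
          neg_neg, neg_zero, add_zero, zero_add] at h1
        rw [mul_assoc]; exact two_cancelA _ _ h1
      have hde : t = a + b + c := by
        have hdt := hdecomp t
        rw [d11, d12, d21, d22] at hdt
        rw [← hdt]; abel
      exact hde ▸ ht
    have hsI2 : star (Complex.I • (P₂ - P₁)) = -(Complex.I • (P₂ - P₁)) := by
      simp [star_smul, Complex.star_def, Complex.conj_I, star_sub, hP₁star, hsF]
    -- C4b : A₁₂ + A₂₁ + A₂₂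
    have C4b : ∀ b c d : A, P₁*b*P₂ = b → P₂*c*P₁ = c → P₂*d*P₂ = d →
        φ (b + c + d) = φ b + φ c + φ d := by
      intro b c d hb hc hd
      obtain ⟨t, ht⟩ := hsurj (φ b + φ c + φ d)
      have hbL := shape_left hEE hb
      have hbR := shape_right hFF hb
      have hbL0 := shape_lzero hFE hb
      have hbR0 := shape_rzero hFE hb
      have hcL := shape_left hFF hc
      have hcR := shape_right hEE hc
      have hcL0 := shape_lzero hEF hc
      have hcR0 := shape_rzero hEF hc
      have hdL := shape_left hFF hd
      have hdR := shape_right hFF hd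
      have hdL0 := shape_lzero hEF hd
      have hdR0 := shape_rzero hFE hd
      have haL := hbL; have haR := hbR; have haL0 := hbL0; have haR0 := hbR0
      -- word 1 : s = I • P₁
      have key1 : φ ((Complex.I • P₁)*t + t*(Complex.I • P₁))
          = φ ((Complex.I • P₁)*b + b*(Complex.I • P₁))
            + φ ((Complex.I • P₁)*c + c*(Complex.I • P₁))
            + φ ((Complex.I • P₁)*d + d*(Complex.I • P₁)) := by
        rw [hP3 _ t hsIE, hP3 _ b hsIE, hP3 _ c hsIE, hP3 _ d hsIE, ht]; noncomm_ring
      have hvb : (Complex.I • P₁)*b + b*(Complex.I • P₁) = Complex.I • b := by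
        have h2 : P₁*b + b*P₁ = b := by rw [hbL, hbR0, add_zero]
        rw [smul_mul_assoc, mul_smul_comm, ← smul_add, h2]
      have hvc : (Complex.I • P₁)*c + c*(Complex.I • P₁) = Complex.I • c := by
        have h2 : P₁*c + c*P₁ = c := by rw [hcL0, hcR, zero_add]
        rw [smul_mul_assoc, mul_smul_comm, ← smul_add, h2]
      have hvd : (Complex.I • P₁)*d + d*(Complex.I • P₁) = 0 := by
        have h2 : P₁*d + d*P₁ = 0 := by rw [hdL0, hdR0, add_zero]
        rw [smul_mul_assoc, mul_smul_comm, ← smul_add, h2, smul_zero]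
      rw [hvb, hvc, hvd, h0, add_zero, hsmul, hsmul, ← smul_add, ← C2 b c hb hc,
        ← hsmul] at key1
      have e2 : P₁*t + t*P₁ = b + c := by
        have h3 := hinj key1
        rw [smul_mul_assoc, mul_smul_comm, ← smul_add] at h3
        exact smul_cancel _ Complex.I_ne_zero h3
      have d12 : P₁*t*P₂ = b := by
        have h1 := congrArg (fun z => P₁*z*P₂) e2
        simp only [mul_add, add_mul, sub_mul, mul_sub, mul_neg, neg_mul, mul_assoc, hEE, hEF,
          hFE, hFF, hEEx, hEFx, hFEx, hFFx, haL, haR, haL0, haR0, hbL, hbR, hbL0, hbR0,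
          hcL, hcR, hcL0, hcR0, hdL, hdR, hdL0, hdR0, mul_zero, zero_mul, mul_one, one_mul,
          sub_zero, zero_sub, neg_neg, neg_zero, add_zero, zero_add] at h1
        rw [mul_assoc]; exact h1
      have d21 : P₂*t*P₁ = c := by
        have h1 := congrArg (fun z => P₂*z*P₁) e2
        simp only [mul_add, add_mul, sub_mul, mul_sub, mul_neg, neg_mul, mul_assoc, hEE, hEF,
          hFE, hFF, hEEx, hEFx, hFEx, hFFx, haL, haR, haL0, haR0, hbL, hbR, hbL0, hbR0,
          hcL, hcR, hcL0, hcR0, hdL, hdR, hdL0, hdR0, mul_zero, zero_mul, mul_one, one_mul,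
          sub_zero, zero_sub, neg_neg, neg_zero, add_zero, zero_add] at h1
        rw [mul_assoc]; exact h1
      have d11 : P₁*t*P₁ = 0 := by
        have h1 := congrArg (fun z => P₁*z*P₁) e2
        simp only [mul_add, add_mul, sub_mul, mul_sub, mul_neg, neg_mul, mul_assoc, hEE, hEF,
          hFE, hFF, hEEx, hEFx, hFEx, hFFx, haL, haR, haL0, haR0, hbL, hbR, hbL0, hbR0,
          hcL, hcR, hcL0, hcR0, hdL, hdR, hdL0, hdR0, mul_zero, zero_mul, mul_one, one_mul,
          sub_zero, zero_sub, neg_neg, neg_zero, add_zero, zero_add] at h1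
        rw [mul_assoc]; exact half_cancelA _ h1
      -- word 2 : s = I • (P₂ - P₁)
      have key2 : φ ((Complex.I • (P₂ - P₁))*t + t*(Complex.I • (P₂ - P₁)))
          = φ ((Complex.I • (P₂ - P₁))*b + b*(Complex.I • (P₂ - P₁)))
            + φ ((Complex.I • (P₂ - P₁))*c + c*(Complex.I • (P₂ - P₁)))
            + φ ((Complex.I • (P₂ - P₁))*d + d*(Complex.I • (P₂ - P₁))) := by
        rw [hP3 _ t hsI2, hP3 _ b hsI2, hP3 _ c hsI2, hP3 _ d hsI2, ht]; noncomm_ring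
      have hwb : (Complex.I • (P₂ - P₁))*b + b*(Complex.I • (P₂ - P₁)) = 0 := by
        have h2 : (P₂-P₁)*b + b*(P₂-P₁) = 0 := by
          rw [sub_mul, mul_sub, hbL, hbL0, hbR, hbR0]; abel
        rw [smul_mul_assoc, mul_smul_comm, ← smul_add, h2, smul_zero]
      have hwc : (Complex.I • (P₂ - P₁))*c + c*(Complex.I • (P₂ - P₁)) = 0 := by
        have h2 : (P₂-P₁)*c + c*(P₂-P₁) = 0 := by
          rw [sub_mul, mul_sub, hcL, hcL0, hcR, hcR0]; abel
        rw [smul_mul_assoc, mul_smul_comm, ← smul_add, h2, smul_zero]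
      have hwd : (Complex.I • (P₂ - P₁))*d + d*(Complex.I • (P₂ - P₁))
          = Complex.I • (d + d) := by
        have h2 : (P₂-P₁)*d + d*(P₂-P₁) = d + d := by
          rw [sub_mul, mul_sub, hdL, hdL0, hdR, hdR0]; abel
        rw [smul_mul_assoc, mul_smul_comm, ← smul_add, h2]
      rw [hwb, hwc, hwd, h0, zero_add, zero_add] at key2
      have e3 : (P₂-P₁)*t + t*(P₂-P₁) = d + d := by
        have h3 := hinj key2
        rw [smul_mul_assoc, mul_smul_comm, ← smul_add] at h3
        exact smul_cancel _ Complex.I_ne_zero h3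
      have d22 : P₂*t*P₂ = d := by
        have h1 := congrArg (fun z => P₂*z*P₂) e3
        simp only [mul_add, add_mul, sub_mul, mul_sub, mul_neg, neg_mul, mul_assoc, hEE, hEF,
          hFE, hFF, hEEx, hEFx, hFEx, hFFx, haL, haR, haL0, haR0, hbL, hbR, hbL0, hbR0,
          hcL, hcR, hcL0, hcR0, hdL, hdR, hdL0, hdR0, mul_zero, zero_mul, mul_one, one_mul,
          sub_zero, zero_sub, neg_neg, neg_zero, add_zero, zero_add] at h1
        rw [mul_assoc]; exact two_cancelA _ _ h1
      have hde : t = b + c + d := by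
        have hdt := hdecomp t
        rw [d11, d12, d21, d22] at hdt
        rw [← hdt]; abel
      exact hde ▸ ht
    -- C4c : full decomposition additivity
    have C4c : ∀ a b c d : A, P₁*a*P₁ = a → P₁*b*P₂ = b → P₂*c*P₁ = c → P₂*d*P₂ = d →
        φ (a + b + c + d) = φ a + φ b + φ c + φ d := by
      intro a b c d ha hb hc hd
      obtain ⟨t, ht⟩ := hsurj (φ a + φ b + φ c + φ d)
      have haL := shape_left hEE ha
      have haR := shape_right hEE ha
      have haL0 := shape_lzero hFE ha
      have haR0 := shape_rzero hEF ha
      have hbL := shape_left hEE hb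
      have hbR := shape_right hFF hb
      have hbL0 := shape_lzero hFE hb
      have hbR0 := shape_rzero hFE hb
      have hcL := shape_left hFF hc
      have hcR := shape_right hEE hc
      have hcL0 := shape_lzero hEF hc
      have hcR0 := shape_rzero hEF hc
      have hdL := shape_left hFF hd
      have hdR := shape_right hFF hd
      have hdL0 := shape_lzero hEF hd
      have hdR0 := shape_rzero hFE hd
      -- word 1 : s = I • P₂
      have key1 : φ ((Complex.I • P₂)*t + t*(Complex.I • P₂))
          = φ ((Complex.I • P₂)*a + a*(Complex.I • P₂))
            + φ ((Complex.I • P₂)*b + b*(Complex.I • P₂))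
            + φ ((Complex.I • P₂)*c + c*(Complex.I • P₂))
            + φ ((Complex.I • P₂)*d + d*(Complex.I • P₂)) := by
        rw [hP3 _ t hsIF, hP3 _ a hsIF, hP3 _ b hsIF, hP3 _ c hsIF, hP3 _ d hsIF, ht]
        noncomm_ring
      have hva : (Complex.I • P₂)*a + a*(Complex.I • P₂) = 0 := by
        have h2 : P₂*a + a*P₂ = 0 := by rw [haL0, haR0, add_zero]
        rw [smul_mul_assoc, mul_smul_comm, ← smul_add, h2, smul_zero]
      have hvb : (Complex.I • P₂)*b + b*(Complex.I • P₂) = Complex.I • b := by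
        have h2 : P₂*b + b*P₂ = b := by rw [hbL0, hbR, zero_add]
        rw [smul_mul_assoc, mul_smul_comm, ← smul_add, h2]
      have hvc : (Complex.I • P₂)*c + c*(Complex.I • P₂) = Complex.I • c := by
        have h2 : P₂*c + c*P₂ = c := by rw [hcL, hcR0, add_zero]
        rw [smul_mul_assoc, mul_smul_comm, ← smul_add, h2]
      have hvd : (Complex.I • P₂)*d + d*(Complex.I • P₂) = Complex.I • (d + d) := by
        have h2 : P₂*d + d*P₂ = d + d := by rw [hdL, hdR]
        rw [smul_mul_assoc, mul_smul_comm, ← smul_add, h2]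
      rw [hva, hvb, hvc, hvd, h0, zero_add, hsmul, hsmul, hsmul, ← smul_add, ← smul_add,
        ← C4b b c (d+d) hb hc (shape_add hd hd), ← hsmul] at key1
      have e2 : P₂*t + t*P₂ = b + c + (d + d) := by
        have h3 := hinj key1
        rw [smul_mul_assoc, mul_smul_comm, ← smul_add] at h3
        exact smul_cancel _ Complex.I_ne_zero h3
      have d12 : P₁*t*P₂ = b := by
        have h1 := congrArg (fun z => P₁*z*P₂) e2
        simp only [mul_add, add_mul, sub_mul, mul_sub, mul_neg, neg_mul, mul_assoc, hEE, hEF,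
          hFE, hFF, hEEx, hEFx, hFEx, hFFx, haL, haR, haL0, haR0, hbL, hbR, hbL0, hbR0,
          hcL, hcR, hcL0, hcR0, hdL, hdR, hdL0, hdR0, mul_zero, zero_mul, mul_one, one_mul,
          sub_zero, zero_sub, neg_neg, neg_zero, add_zero, zero_add] at h1
        rw [mul_assoc]; exact h1
      have d21 : P₂*t*P₁ = c := by
        have h1 := congrArg (fun z => P₂*z*P₁) e2
        simp only [mul_add, add_mul, sub_mul, mul_sub, mul_neg, neg_mul, mul_assoc, hEE, hEF,
          hFE, hFF, hEEx, hEFx, hFEx, hFFx, haL, haR, haL0, haR0, hbL, hbR, hbL0, hbR0,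
          hcL, hcR, hcL0, hcR0, hdL, hdR, hdL0, hdR0, mul_zero, zero_mul, mul_one, one_mul,
          sub_zero, zero_sub, neg_neg, neg_zero, add_zero, zero_add] at h1
        rw [mul_assoc]; exact h1
      have d22 : P₂*t*P₂ = d := by
        have h1 := congrArg (fun z => P₂*z*P₂) e2
        simp only [mul_add, add_mul, sub_mul, mul_sub, mul_neg, neg_mul, mul_assoc, hEE, hEF,
          hFE, hFF, hEEx, hEFx, hFEx, hFFx, haL, haR, haL0, haR0, hbL, hbR, hbL0, hbR0,
          hcL, hcR, hcL0, hcR0, hdL, hdR, hdL0, hdR0, mul_zero, zero_mul, mul_one, one_mul,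
          sub_zero, zero_sub, neg_neg, neg_zero, add_zero, zero_add] at h1
        rw [mul_assoc]; exact two_cancelA _ _ h1
      -- word 2 : s = I • P₁
      have key2 : φ ((Complex.I • P₁)*t + t*(Complex.I • P₁))
          = φ ((Complex.I • P₁)*a + a*(Complex.I • P₁))
            + φ ((Complex.I • P₁)*b + b*(Complex.I • P₁))
            + φ ((Complex.I • P₁)*c + c*(Complex.I • P₁))
            + φ ((Complex.I • P₁)*d + d*(Complex.I • P₁)) := by
        rw [hP3 _ t hsIE, hP3 _ a hsIE, hP3 _ b hsIE, hP3 _ c hsIE, hP3 _ d hsIE, ht]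
        noncomm_ring
      have hwa : (Complex.I • P₁)*a + a*(Complex.I • P₁) = Complex.I • (a + a) := by
        have h2 : P₁*a + a*P₁ = a + a := by rw [haL, haR]
        rw [smul_mul_assoc, mul_smul_comm, ← smul_add, h2]
      have hwb : (Complex.I • P₁)*b + b*(Complex.I • P₁) = Complex.I • b := by
        have h2 : P₁*b + b*P₁ = b := by rw [hbL, hbR0, add_zero]
        rw [smul_mul_assoc, mul_smul_comm, ← smul_add, h2]
      have hwc : (Complex.I • P₁)*c + c*(Complex.I • P₁) = Complex.I • c := by
        have h2 : P₁*c + c*P₁ = c := by rw [hcL0, hcR, zero_add]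
        rw [smul_mul_assoc, mul_smul_comm, ← smul_add, h2]
      have hwd : (Complex.I • P₁)*d + d*(Complex.I • P₁) = 0 := by
        have h2 : P₁*d + d*P₁ = 0 := by rw [hdL0, hdR0, add_zero]
        rw [smul_mul_assoc, mul_smul_comm, ← smul_add, h2, smul_zero]
      rw [hwa, hwb, hwc, hwd, h0, add_zero, hsmul, hsmul, hsmul, ← smul_add, ← smul_add,
        ← C4a (a+a) b c (shape_add ha ha) hb hc, ← hsmul] at key2
      have e3 : P₁*t + t*P₁ = a + a + b + c := by
        have h3 := hinj key2
        rw [smul_mul_assoc, mul_smul_comm, ← smul_add] at h3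
        have h4 := smul_cancel _ Complex.I_ne_zero h3
        rw [h4]
      have d11 : P₁*t*P₁ = a := by
        have h1 := congrArg (fun z => P₁*z*P₁) e3
        simp only [mul_add, add_mul, sub_mul, mul_sub, mul_neg, neg_mul, mul_assoc, hEE, hEF,
          hFE, hFF, hEEx, hEFx, hFEx, hFFx, haL, haR, haL0, haR0, hbL, hbR, hbL0, hbR0,
          hcL, hcR, hcL0, hcR0, hdL, hdR, hdL0, hdR0, mul_zero, zero_mul, mul_one, one_mul,
          sub_zero, zero_sub, neg_neg, neg_zero, add_zero, zero_add] at h1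
        rw [mul_assoc]
        exact two_cancelA _ _ h1
      have hde : t = a + b + c + d := by
        have hdt := hdecomp t
        rw [d11, d12, d21, d22] at hdt
        exact hdt.symm
      exact hde ▸ ht
    -- C5b : key splitting in A₁₂
    have C5b : ∀ s₁ v w y : A, P₁*s₁*P₁ = s₁ → star s₁ = -s₁ → P₁*v*P₂ = v →
        P₁*w*P₂ = w → P₂*y*P₂ = y → φ (s₁*v + w*y) = φ (s₁*v) + φ (w*y) := by
      intro s₁ v w y hs1 hsk1 hv hw hy
      have hstw := shape_star hP₁star hsF hw
      have hss : star (s₁ + w - star w) = -(s₁ + w - star w) := by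
        rw [star_sub, star_add, hsk1, star_star]; abel
      have hsplit : φ (v + y) = φ v + φ y := by
        have h5 := C4b v 0 y hv (by rw [mul_zero, zero_mul]) hy
        rw [add_zero, h0, add_zero] at h5
        exact h5
      have key : φ ((s₁ + w - star w)*(v+y) + (v+y)*(s₁ + w - star w))
          = φ ((s₁ + w - star w)*v + v*(s₁ + w - star w))
            + φ ((s₁ + w - star w)*y + y*(s₁ + w - star w)) := by
        rw [hP3 _ (v+y) hss, hP3 _ v hss, hP3 _ y hss, hsplit]; noncomm_ring
      have hwv : w*v = 0 := shape_mul_zero hFE hw hv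
      have hvs : v*s₁ = 0 := shape_mul_zero hFE hv hs1
      have hvw : v*w = 0 := shape_mul_zero hFE hv hw
      have hs1y : s₁*y = 0 := shape_mul_zero hEF hs1 hy
      have hstwy : star w*y = 0 := shape_mul_zero hEF hstw hy
      have hys : y*s₁ = 0 := shape_mul_zero hFE hy hs1
      have hyw : y*w = 0 := shape_mul_zero hFE hy hw
      have E1 : (s₁ + w - star w)*v + v*(s₁ + w - star w)
          = s₁*v - star w*v - v*star w := by
        simp only [add_mul, sub_mul, mul_add, mul_sub, hwv, hvs, hvw]; abel
      have E2 : (s₁ + w - star w)*y + y*(s₁ + w - star w)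
          = w*y - y*star w := by
        simp only [add_mul, sub_mul, mul_add, mul_sub, hs1y, hstwy, hys, hyw]; abel
      have E0 : (s₁ + w - star w)*(v+y) + (v+y)*(s₁ + w - star w)
          = -(v*star w) + (s₁*v + w*y) + (-(y*star w)) + (-(star w*v)) := by
        rw [mul_add, add_mul]
        have h6 : ((s₁ + w - star w)*v + (s₁ + w - star w)*y)
            + (v*(s₁ + w - star w) + y*(s₁ + w - star w))
            = ((s₁ + w - star w)*v + v*(s₁ + w - star w))
              + ((s₁ + w - star w)*y + y*(s₁ + w - star w)) := by abel
        rw [h6, E1, E2]; abel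
      have keyL : φ ((s₁ + w - star w)*(v+y) + (v+y)*(s₁ + w - star w))
          = φ (-(v*star w)) + φ (s₁*v + w*y) + φ (-(y*star w)) + φ (-(star w*v)) := by
        rw [E0]
        exact C4c _ _ _ _ (shape_neg (shape_mul hEE hEE hv hstw))
          (shape_add (shape_mul hEE hFF hs1 hv) (shape_mul hEE hFF hw hy))
          (shape_neg (shape_mul hFF hEE hy hstw))
          (shape_neg (shape_mul hFF hFF hstw hv))
      have keyR1 : φ ((s₁ + w - star w)*v + v*(s₁ + w - star w))
          = φ (-(v*star w)) + φ (s₁*v) + φ (-(star w*v)) := by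
        have h6 : (s₁ + w - star w)*v + v*(s₁ + w - star w)
            = -(v*star w) + s₁*v + 0 + (-(star w*v)) := by rw [E1]; abel
        rw [h6, C4c _ _ _ _ (shape_neg (shape_mul hEE hEE hv hstw))
          (shape_mul hEE hFF hs1 hv) shape_zero
          (shape_neg (shape_mul hFF hFF hstw hv)), h0, add_zero]
      have keyR2 : φ ((s₁ + w - star w)*y + y*(s₁ + w - star w))
          = φ (w*y) + φ (-(y*star w)) := by
        have h6 : (s₁ + w - star w)*y + y*(s₁ + w - star w)
            = (w*y) + (-(y*star w)) := by rw [E2]; abel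
        rw [h6, C2 _ _ (shape_mul hEE hFF hw hy) (shape_neg (shape_mul hFF hEE hy hstw))]
      have h7 : φ (-(v*star w)) + φ (s₁*v + w*y) + φ (-(y*star w)) + φ (-(star w*v))
          = (φ (-(v*star w)) + φ (s₁*v) + φ (-(star w*v))) + (φ (w*y) + φ (-(y*star w))) := by
        rw [← keyL, key, keyR1, keyR2]
      have h10 : φ (s₁*v + w*y) - (φ (s₁*v) + φ (w*y))
          = (φ (-(v*star w)) + φ (s₁*v + w*y) + φ (-(y*star w)) + φ (-(star w*v)))
            - ((φ (-(v*star w)) + φ (s₁*v) + φ (-(star w*v)))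
              + (φ (w*y) + φ (-(y*star w)))) := by abel
      rw [h7, sub_self] at h10
      exact sub_eq_zero.mp h10
    -- C5 : additivity within A₁₂
    have C5 : ∀ a b : A, P₁*a*P₂ = a → P₁*b*P₂ = b → φ (a + b) = φ a + φ b := by
      intro a b ha hb
      have hshE : P₁*P₁*P₁ = P₁ := by rw [hEE, hEE]
      have hshF : P₂*P₂*P₂ = P₂ := by rw [hFF, hFF]
      have h1 := C5b (Complex.I • P₁) ((-Complex.I) • a) b P₂
        (shape_smul _ hshE) hsIE (shape_smul _ ha) hb hshF
      have hv1 : (Complex.I • P₁)*((-Complex.I) • a) = a := by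
        rw [smul_mul_assoc, mul_smul_comm, smul_smul, shape_left hEE ha, mul_neg,
          Complex.I_mul_I, neg_neg, one_smul]
      have hv2 : b*P₂ = b := shape_right hFF hb
      rw [hv1, hv2] at h1
      exact h1
    -- C5b' : key splitting in A₂₁
    have C5b' : ∀ s₂ v w y : A, P₂*s₂*P₂ = s₂ → star s₂ = -s₂ → P₂*v*P₁ = v →
        P₂*w*P₁ = w → P₁*y*P₁ = y → φ (s₂*v + w*y) = φ (s₂*v) + φ (w*y) := by
      intro s₂ v w y hs2 hsk2 hv hw hy
      have hstw := shape_star hsF hP₁star hw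
      have hss : star (s₂ + w - star w) = -(s₂ + w - star w) := by
        rw [star_sub, star_add, hsk2, star_star]; abel
      have hsplit : φ (v + y) = φ v + φ y := by
        have h5 := C4a y 0 v hy (by rw [mul_zero, zero_mul]) hv
        rw [add_zero, h0, add_zero] at h5
        rw [add_comm v y, add_comm (φ v) (φ y)]
        exact h5
      have key : φ ((s₂ + w - star w)*(v+y) + (v+y)*(s₂ + w - star w))
          = φ ((s₂ + w - star w)*v + v*(s₂ + w - star w))
            + φ ((s₂ + w - star w)*y + y*(s₂ + w - star w)) := by
        rw [hP3 _ (v+y) hss, hP3 _ v hss, hP3 _ y hss, hsplit]; noncomm_ring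
      have hwv : w*v = 0 := shape_mul_zero hEF hw hv
      have hvs : v*s₂ = 0 := shape_mul_zero hEF hv hs2
      have hvw : v*w = 0 := shape_mul_zero hEF hv hw
      have hs2y : s₂*y = 0 := shape_mul_zero hFE hs2 hy
      have hstwy : star w*y = 0 := shape_mul_zero hFE hstw hy
      have hys : y*s₂ = 0 := shape_mul_zero hEF hy hs2
      have hyw : y*w = 0 := shape_mul_zero hEF hy hw
      have E1 : (s₂ + w - star w)*v + v*(s₂ + w - star w)
          = s₂*v - star w*v - v*star w := by
        simp only [add_mul, sub_mul, mul_add, mul_sub, hwv, hvs, hvw]; abel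
      have E2 : (s₂ + w - star w)*y + y*(s₂ + w - star w)
          = w*y - y*star w := by
        simp only [add_mul, sub_mul, mul_add, mul_sub, hs2y, hstwy, hys, hyw]; abel
      have E0 : (s₂ + w - star w)*(v+y) + (v+y)*(s₂ + w - star w)
          = -(star w*v) + (-(y*star w)) + (s₂*v + w*y) + (-(v*star w)) := by
        rw [mul_add, add_mul]
        have h6 : ((s₂ + w - star w)*v + (s₂ + w - star w)*y)
            + (v*(s₂ + w - star w) + y*(s₂ + w - star w))
            = ((s₂ + w - star w)*v + v*(s₂ + w - star w))
              + ((s₂ + w - star w)*y + y*(s₂ + w - star w)) := by abel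
        rw [h6, E1, E2]; abel
      have keyL : φ ((s₂ + w - star w)*(v+y) + (v+y)*(s₂ + w - star w))
          = φ (-(star w*v)) + φ (-(y*star w)) + φ (s₂*v + w*y) + φ (-(v*star w)) := by
        rw [E0]
        exact C4c _ _ _ _ (shape_neg (shape_mul hEE hEE hstw hv))
          (shape_neg (shape_mul hEE hFF hy hstw))
          (shape_add (shape_mul hFF hEE hs2 hv) (shape_mul hFF hEE hw hy))
          (shape_neg (shape_mul hFF hFF hv hstw))
      have keyR1 : φ ((s₂ + w - star w)*v + v*(s₂ + w - star w))
          = φ (-(star w*v)) + φ (s₂*v) + φ (-(v*star w)) := by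
        have h6 : (s₂ + w - star w)*v + v*(s₂ + w - star w)
            = -(star w*v) + 0 + s₂*v + (-(v*star w)) := by rw [E1]; abel
        rw [h6, C4c _ _ _ _ (shape_neg (shape_mul hEE hEE hstw hv)) shape_zero
          (shape_mul hFF hEE hs2 hv) (shape_neg (shape_mul hFF hFF hv hstw))]
        rw [h0, add_zero]
      have keyR2 : φ ((s₂ + w - star w)*y + y*(s₂ + w - star w))
          = φ (-(y*star w)) + φ (w*y) := by
        have h6 : (s₂ + w - star w)*y + y*(s₂ + w - star w)
            = (-(y*star w)) + (w*y) := by rw [E2]; abel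
        rw [h6, C2 _ _ (shape_neg (shape_mul hEE hFF hy hstw)) (shape_mul hFF hEE hw hy)]
      have h7 : φ (-(star w*v)) + φ (-(y*star w)) + φ (s₂*v + w*y) + φ (-(v*star w))
          = (φ (-(star w*v)) + φ (s₂*v) + φ (-(v*star w)))
            + (φ (-(y*star w)) + φ (w*y)) := by
        rw [← keyL, key, keyR1, keyR2]
      have h10 : φ (s₂*v + w*y) - (φ (s₂*v) + φ (w*y))
          = (φ (-(star w*v)) + φ (-(y*star w)) + φ (s₂*v + w*y) + φ (-(v*star w)))
            - ((φ (-(star w*v)) + φ (s₂*v) + φ (-(v*star w)))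
              + (φ (-(y*star w)) + φ (w*y))) := by abel
      rw [h7, sub_self] at h10
      exact sub_eq_zero.mp h10
    -- C5' : additivity within A₂₁
    have C5' : ∀ a b : A, P₂*a*P₁ = a → P₂*b*P₁ = b → φ (a + b) = φ a + φ b := by
      intro a b ha hb
      have hshE : P₁*P₁*P₁ = P₁ := by rw [hEE, hEE]
      have hshF : P₂*P₂*P₂ = P₂ := by rw [hFF, hFF]
      have h1 := C5b' (Complex.I • P₂) ((-Complex.I) • a) b P₁
        (shape_smul _ hshF) hsIF (shape_smul _ ha) hb hshE
      have hv1 : (Complex.I • P₂)*((-Complex.I) • a) = a := by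
        rw [smul_mul_assoc, mul_smul_comm, smul_smul, shape_left hFF ha, mul_neg,
          Complex.I_mul_I, neg_neg, one_smul]
      have hv2 : b*P₁ = b := shape_right hEE hb
      rw [hv1, hv2] at h1
      exact h1
    have hA12 : ∀ z : A, P₁*(P₁*z*P₂)*P₂ = P₁*z*P₂ := fun z => by
      rw [← mul_assoc P₁ (P₁*z) P₂, ← mul_assoc P₁ P₁ z, hEE, mul_assoc (P₁*z) P₂ P₂, hFF]
    -- C6 : additivity within A₁₁
    have C6 : ∀ a b : A, P₁*a*P₁ = a → P₁*b*P₁ = b → φ (a + b) = φ a + φ b := by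
      intro a b ha hb
      obtain ⟨t, ht⟩ := hsurj (φ a + φ b)
      have haL := shape_left hEE ha
      have haR := shape_right hEE ha
      have haL0 := shape_lzero hFE ha
      have haR0 := shape_rzero hEF ha
      have hbL := shape_left hEE hb
      have hbR := shape_right hEE hb
      have hbL0 := shape_lzero hFE hb
      have hbR0 := shape_rzero hEF hb
      -- step 1 : t ∈ A₁₁
      have key1 : φ ((Complex.I • P₂)*t + t*(Complex.I • P₂))
          = φ ((Complex.I • P₂)*a + a*(Complex.I • P₂))
            + φ ((Complex.I • P₂)*b + b*(Complex.I • P₂)) := by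
        rw [hP3 _ t hsIF, hP3 _ a hsIF, hP3 _ b hsIF, ht]; noncomm_ring
      have hva : (Complex.I • P₂)*a + a*(Complex.I • P₂) = 0 := by
        have h2 : P₂*a + a*P₂ = 0 := by rw [haL0, haR0, add_zero]
        rw [smul_mul_assoc, mul_smul_comm, ← smul_add, h2, smul_zero]
      have hvb : (Complex.I • P₂)*b + b*(Complex.I • P₂) = 0 := by
        have h2 : P₂*b + b*P₂ = 0 := by rw [hbL0, hbR0, add_zero]
        rw [smul_mul_assoc, mul_smul_comm, ← smul_add, h2, smul_zero]
      rw [hva, hvb, h0, add_zero] at key1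
      have e2 : P₂*t + t*P₂ = 0 := by
        have h3 := hinj (key1.trans h0.symm)
        rw [smul_mul_assoc, mul_smul_comm, ← smul_add] at h3
        exact smul_cancel _ Complex.I_ne_zero (h3.trans (smul_zero _).symm)
      have d12 : P₁*t*P₂ = 0 := by
        have h1 := congrArg (fun z => P₁*z*P₂) e2
        simp only [mul_add, add_mul, mul_assoc, hEE, hEF, hFE, hFF, hEEx, hEFx, hFEx, hFFx,
          mul_zero, zero_mul, add_zero, zero_add] at h1
        rw [mul_assoc]; exact h1
      have d21 : P₂*t*P₁ = 0 := by
        have h1 := congrArg (fun z => P₂*z*P₁) e2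
        simp only [mul_add, add_mul, mul_assoc, hEE, hEF, hFE, hFF, hEEx, hEFx, hFEx, hFFx,
          mul_zero, zero_mul, add_zero, zero_add] at h1
        rw [mul_assoc]; exact h1
      have d22 : P₂*t*P₂ = 0 := by
        have h1 := congrArg (fun z => P₂*z*P₂) e2
        simp only [mul_add, add_mul, mul_assoc, hEE, hEF, hFE, hFF, hEEx, hEFx, hFEx, hFFx,
          mul_zero, zero_mul, add_zero, zero_add] at h1
        rw [mul_assoc]; exact half_cancelA _ h1
      have ht11 : P₁*t*P₁ = t := by
        have hdt := hdecomp t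
        rw [d12, d21, d22] at hdt
        simpa using hdt
      -- step 2
      have hkey : ∀ w : A, P₁*w*P₂ = w → star w*t = star w*a + star w*b := by
        intro w hw
        have hstw := shape_star hP₁star hsF hw
        have hsw : star (w - star w) = -(w - star w) := by rw [star_sub, star_star]; abel
        have key2 : φ ((w - star w)*t + t*(w - star w))
            = φ ((w - star w)*a + a*(w - star w))
              + φ ((w - star w)*b + b*(w - star w)) := by
          rw [hP3 _ t hsw, hP3 _ a hsw, hP3 _ b hsw, ht]; noncomm_ring
        have hwa : w*a = 0 := shape_mul_zero hFE hw ha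
        have hastw : a*star w = 0 := shape_mul_zero hEF ha hstw
        have hwb : w*b = 0 := shape_mul_zero hFE hw hb
        have hbstw : b*star w = 0 := shape_mul_zero hEF hb hstw
        have hwt : w*t = 0 := shape_mul_zero hFE hw ht11
        have htstw : t*star w = 0 := shape_mul_zero hEF ht11 hstw
        have Ea : (w - star w)*a + a*(w - star w) = a*w + (-(star w*a)) := by
          simp only [sub_mul, mul_sub, hwa, hastw]; abel
        have Eb : (w - star w)*b + b*(w - star w) = b*w + (-(star w*b)) := by
          simp only [sub_mul, mul_sub, hwb, hbstw]; abel
        have Et : (w - star w)*t + t*(w - star w) = t*w - star w*t := by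
          simp only [sub_mul, mul_sub, hwt, htstw]; abel
        rw [Ea, Eb, Et,
          C2 _ _ (shape_mul hEE hFF ha hw) (shape_neg (shape_mul hFF hEE hstw ha)),
          C2 _ _ (shape_mul hEE hFF hb hw) (shape_neg (shape_mul hFF hEE hstw hb))] at key2
        have hmerge : (φ (a*w) + φ (-(star w*a))) + (φ (b*w) + φ (-(star w*b)))
            = φ ((a*w + b*w) + ((-(star w*a)) + (-(star w*b)))) := by
          rw [C2 _ _ (shape_add (shape_mul hEE hFF ha hw) (shape_mul hEE hFF hb hw))
              (shape_add (shape_neg (shape_mul hFF hEE hstw ha))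
                (shape_neg (shape_mul hFF hEE hstw hb))),
            C5 _ _ (shape_mul hEE hFF ha hw) (shape_mul hEE hFF hb hw),
            C5' _ _ (shape_neg (shape_mul hFF hEE hstw ha))
              (shape_neg (shape_mul hFF hEE hstw hb))]
          abel
        rw [hmerge] at key2
        have e5 := hinj key2
        have h1 := congrArg (fun z => P₂*z) e5
        simp only [mul_sub, mul_add, mul_neg,
          shape_lzero hFE (shape_mul hEE hFF ht11 hw),
          shape_left hFF (shape_mul hFF hEE hstw ht11),
          shape_lzero hFE (shape_mul hEE hFF ha hw),
          shape_lzero hFE (shape_mul hEE hFF hb hw),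
          shape_left hFF (shape_mul hFF hEE hstw ha),
          shape_left hFF (shape_mul hFF hEE hstw hb),
          zero_sub, zero_add, add_zero, neg_neg] at h1
        have h2 := congrArg (fun z : A => -z) h1
        simp only [neg_neg, neg_add] at h2
        rw [h2]
      -- conclusion via hspade
      have hdzero : ∀ Y : A, P₂*Y*(t - (a+b)) = 0 := by
        intro Y
        have h4 := hkey _ (hA12 (star Y))
        have hstw2 : star (P₁*(star Y)*P₂) = P₂*Y*P₁ := by
          rw [star_mul, star_mul, star_star, hP₁star, hsF, mul_assoc]
        rw [hstw2] at h4
        have hPd : P₁*(t - (a+b)) = t - (a+b) := by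
          rw [mul_sub, mul_add, shape_left hEE ht11, shape_left hEE ha, shape_left hEE hb]
        calc P₂*Y*(t - (a+b)) = P₂*Y*(P₁*(t - (a+b))) := by rw [hPd]
          _ = P₂*Y*P₁*(t-(a+b)) := (mul_assoc (P₂*Y) P₁ _).symm
          _ = 0 := by rw [mul_sub, mul_add, h4, sub_self]
      have hdz := hspade P₂ (by simp : P₂ ∈ ({P₁, P₂} : Set A)) (t - (a+b)) hdzero
      have hd : t = a + b := by
        have := sub_eq_zero.mp hdz
        exact this
      exact hd ▸ ht
    -- C6' : additivity within A₂₂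
    have C6' : ∀ a b : A, P₂*a*P₂ = a → P₂*b*P₂ = b → φ (a + b) = φ a + φ b := by
      intro a b ha hb
      obtain ⟨t, ht⟩ := hsurj (φ a + φ b)
      have haL := shape_left hFF ha
      have haR := shape_right hFF ha
      have haL0 := shape_lzero hEF ha
      have haR0 := shape_rzero hFE ha
      have hbL := shape_left hFF hb
      have hbR := shape_right hFF hb
      have hbL0 := shape_lzero hEF hb
      have hbR0 := shape_rzero hFE hb
      -- step 1 : t ∈ A₂₂
      have key1 : φ ((Complex.I • P₁)*t + t*(Complex.I • P₁))
          = φ ((Complex.I • P₁)*a + a*(Complex.I • P₁))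
            + φ ((Complex.I • P₁)*b + b*(Complex.I • P₁)) := by
        rw [hP3 _ t hsIE, hP3 _ a hsIE, hP3 _ b hsIE, ht]; noncomm_ring
      have hva : (Complex.I • P₁)*a + a*(Complex.I • P₁) = 0 := by
        have h2 : P₁*a + a*P₁ = 0 := by rw [haL0, haR0, add_zero]
        rw [smul_mul_assoc, mul_smul_comm, ← smul_add, h2, smul_zero]
      have hvb : (Complex.I • P₁)*b + b*(Complex.I • P₁) = 0 := by
        have h2 : P₁*b + b*P₁ = 0 := by rw [hbL0, hbR0, add_zero]
        rw [smul_mul_assoc, mul_smul_comm, ← smul_add, h2, smul_zero]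
      rw [hva, hvb, h0, add_zero] at key1
      have e2 : P₁*t + t*P₁ = 0 := by
        have h3 := hinj (key1.trans h0.symm)
        rw [smul_mul_assoc, mul_smul_comm, ← smul_add] at h3
        exact smul_cancel _ Complex.I_ne_zero (h3.trans (smul_zero _).symm)
      have d12 : P₁*t*P₂ = 0 := by
        have h1 := congrArg (fun z => P₁*z*P₂) e2
        simp only [mul_add, add_mul, mul_assoc, hEE, hEF, hFE, hFF, hEEx, hEFx, hFEx, hFFx,
          mul_zero, zero_mul, add_zero, zero_add] at h1
        rw [mul_assoc]; exact h1
      have d21 : P₂*t*P₁ = 0 := by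
        have h1 := congrArg (fun z => P₂*z*P₁) e2
        simp only [mul_add, add_mul, mul_assoc, hEE, hEF, hFE, hFF, hEEx, hEFx, hFEx, hFFx,
          mul_zero, zero_mul, add_zero, zero_add] at h1
        rw [mul_assoc]; exact h1
      have d11 : P₁*t*P₁ = 0 := by
        have h1 := congrArg (fun z => P₁*z*P₁) e2
        simp only [mul_add, add_mul, mul_assoc, hEE, hEF, hFE, hFF, hEEx, hEFx, hFEx, hFFx,
          mul_zero, zero_mul, add_zero, zero_add] at h1
        rw [mul_assoc]; exact half_cancelA _ h1
      have ht22 : P₂*t*P₂ = t := by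
        have hdt := hdecomp t
        rw [d11, d12, d21] at hdt
        simpa using hdt
      -- step 2
      have hkey : ∀ w : A, P₁*w*P₂ = w → w*t = w*a + w*b := by
        intro w hw
        have hstw := shape_star hP₁star hsF hw
        have hsw : star (w - star w) = -(w - star w) := by rw [star_sub, star_star]; abel
        have key2 : φ ((w - star w)*t + t*(w - star w))
            = φ ((w - star w)*a + a*(w - star w))
              + φ ((w - star w)*b + b*(w - star w)) := by
          rw [hP3 _ t hsw, hP3 _ a hsw, hP3 _ b hsw, ht]; noncomm_ring
        have hwa : star w*a = 0 := shape_mul_zero hEF hstw ha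
        have hastw : a*w = 0 := shape_mul_zero hFE ha hw
        have hwb : star w*b = 0 := shape_mul_zero hEF hstw hb
        have hbstw : b*w = 0 := shape_mul_zero hFE hb hw
        have hwt : star w*t = 0 := shape_mul_zero hEF hstw ht22
        have htstw : t*w = 0 := shape_mul_zero hFE ht22 hw
        have Ea : (w - star w)*a + a*(w - star w) = w*a + (-(a*star w)) := by
          simp only [sub_mul, mul_sub, hwa, hastw]; abel
        have Eb : (w - star w)*b + b*(w - star w) = w*b + (-(b*star w)) := by
          simp only [sub_mul, mul_sub, hwb, hbstw]; abel
        have Et : (w - star w)*t + t*(w - star w) = w*t - t*star w := by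
          simp only [sub_mul, mul_sub, hwt, htstw]; abel
        rw [Ea, Eb, Et,
          C2 _ _ (shape_mul hEE hFF hw ha) (shape_neg (shape_mul hFF hEE ha hstw)),
          C2 _ _ (shape_mul hEE hFF hw hb) (shape_neg (shape_mul hFF hEE hb hstw))] at key2
        have hmerge : (φ (w*a) + φ (-(a*star w))) + (φ (w*b) + φ (-(b*star w)))
            = φ ((w*a + w*b) + ((-(a*star w)) + (-(b*star w)))) := by
          rw [C2 _ _ (shape_add (shape_mul hEE hFF hw ha) (shape_mul hEE hFF hw hb))
              (shape_add (shape_neg (shape_mul hFF hEE ha hstw))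
                (shape_neg (shape_mul hFF hEE hb hstw))),
            C5 _ _ (shape_mul hEE hFF hw ha) (shape_mul hEE hFF hw hb),
            C5' _ _ (shape_neg (shape_mul hFF hEE ha hstw))
              (shape_neg (shape_mul hFF hEE hb hstw))]
          abel
        rw [hmerge] at key2
        have e5 := hinj key2
        have h1 := congrArg (fun z => P₁*z) e5
        simp only [mul_sub, mul_add, mul_neg,
          shape_left hEE (shape_mul hEE hFF hw ht22),
          shape_lzero hEF (shape_mul hFF hEE ht22 hstw),
          shape_left hEE (shape_mul hEE hFF hw ha),
          shape_left hEE (shape_mul hEE hFF hw hb),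
          shape_lzero hEF (shape_mul hFF hEE ha hstw),
          shape_lzero hEF (shape_mul hFF hEE hb hstw),
          sub_zero, zero_add, add_zero, neg_zero, neg_neg] at h1
        exact h1
      -- conclusion via hspade
      have hdzero : ∀ Y : A, P₁*Y*(t - (a+b)) = 0 := by
        intro Y
        have h4 := hkey _ (hA12 Y)
        have hPd : P₂*(t - (a+b)) = t - (a+b) := by
          rw [mul_sub, mul_add, shape_left hFF ht22, shape_left hFF ha, shape_left hFF hb]
        calc P₁*Y*(t - (a+b)) = P₁*Y*(P₂*(t - (a+b))) := by rw [hPd]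
          _ = P₁*Y*P₂*(t-(a+b)) := (mul_assoc (P₁*Y) P₂ _).symm
          _ = 0 := by rw [mul_sub, mul_add, h4, sub_self]
      have hdz := hspade P₁ (by simp : P₁ ∈ ({P₁, P₂} : Set A)) (t - (a+b)) hdzero
      have hd : t = a + b := sub_eq_zero.mp hdz
      exact hd ▸ ht
    -- full additivity
    have h11s : ∀ z : A, P₁*(P₁*z*P₁)*P₁ = P₁*z*P₁ := fun z => by
      rw [← mul_assoc P₁ (P₁*z) P₁, ← mul_assoc P₁ P₁ z, hEE, mul_assoc (P₁*z) P₁ P₁, hEE]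
    have h21s : ∀ z : A, P₂*(P₂*z*P₁)*P₁ = P₂*z*P₁ := fun z => by
      rw [← mul_assoc P₂ (P₂*z) P₁, ← mul_assoc P₂ P₂ z, hFF, mul_assoc (P₂*z) P₁ P₁, hEE]
    have h22s : ∀ z : A, P₂*(P₂*z*P₂)*P₂ = P₂*z*P₂ := fun z => by
      rw [← mul_assoc P₂ (P₂*z) P₂, ← mul_assoc P₂ P₂ z, hFF, mul_assoc (P₂*z) P₂ P₂, hFF]
    have hsplit : ∀ z : A, φ z = φ (P₁*z*P₁) + φ (P₁*z*P₂) + φ (P₂*z*P₁) + φ (P₂*z*P₂) := by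
      intro z
      conv_lhs => rw [← hdecomp z]
      exact C4c _ _ _ _ (h11s z) (hA12 z) (h21s z) (h22s z)
    have CADD : ∀ x y : A, φ (x + y) = φ x + φ y := by
      intro x y
      have c11 : P₁*(x+y)*P₁ = P₁*x*P₁ + P₁*y*P₁ := by rw [mul_add, add_mul]
      have c12 : P₁*(x+y)*P₂ = P₁*x*P₂ + P₁*y*P₂ := by rw [mul_add, add_mul]
      have c21 : P₂*(x+y)*P₁ = P₂*x*P₁ + P₂*y*P₁ := by rw [mul_add, add_mul]
      have c22 : P₂*(x+y)*P₂ = P₂*x*P₂ + P₂*y*P₂ := by rw [mul_add, add_mul]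
      rw [hsplit (x+y), hsplit x, hsplit y, c11, c12, c21, c22,
        C6 _ _ (h11s x) (h11s y), C5 _ _ (hA12 x) (hA12 y),
        C5' _ _ (h21s x) (h21s y), C6' _ _ (h22s x) (h22s y)]
      abel
    have hsub : ∀ u v : A, φ (u - v) = φ u - φ v := by
      intro u v; rw [sub_eq_add_neg, CADD, hneg, sub_eq_add_neg]
    -- star preservation
    have CSTAR : ∀ x : A, φ (star x) = star (φ x) := by
      intro x
      have hx : x = ((2:ℂ)⁻¹) • (x + star x)
          + Complex.I • (((2:ℂ)⁻¹ * (-Complex.I)) • (x - star x)) := by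
        match_scalars <;> (ring_nf; rw [Complex.I_sq]; norm_num)
      have hxs : star x = ((2:ℂ)⁻¹) • (x + star x)
          - Complex.I • (((2:ℂ)⁻¹ * (-Complex.I)) • (x - star x)) := by
        match_scalars <;> (ring_nf; rw [Complex.I_sq]; norm_num)
      have hh_sa : star (((2:ℂ)⁻¹) • (x + star x)) = ((2:ℂ)⁻¹) • (x + star x) := by
        rw [star_smul, star_add, star_star]
        rw [show star ((2:ℂ)⁻¹) = ((2:ℂ)⁻¹) by simp]
        rw [add_comm]
      have hk_sa : star (((2:ℂ)⁻¹ * (-Complex.I)) • (x - star x))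
          = ((2:ℂ)⁻¹ * (-Complex.I)) • (x - star x) := by
        rw [star_smul, star_sub, star_star]
        rw [show star ((2:ℂ)⁻¹ * (-Complex.I)) = -((2:ℂ)⁻¹ * (-Complex.I)) by
          simp [Complex.star_def]]
        rw [neg_smul, smul_sub, smul_sub]
        abel
      have s1 := hsa _ hh_sa
      have s2 := hsa _ hk_sa
      have e1 : φ x = φ (((2:ℂ)⁻¹) • (x + star x))
          + Complex.I • φ (((2:ℂ)⁻¹ * (-Complex.I)) • (x - star x)) := by
        conv_lhs => rw [hx]
        rw [CADD, hsmul Complex.I]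
      have e2 : φ (star x) = φ (((2:ℂ)⁻¹) • (x + star x))
          - Complex.I • φ (((2:ℂ)⁻¹ * (-Complex.I)) • (x - star x)) := by
        conv_lhs => rw [hxs]
        rw [hsub, hsmul Complex.I]
      rw [e2, e1, star_add, star_smul, s1, s2,
        show star (Complex.I) = -Complex.I by simp [Complex.star_def, Complex.conj_I],
        neg_smul, ← sub_eq_add_neg]
    -- multiplicativity
    have CMULh : ∀ x h : A, star h = h → φ (x*h) = φ x * φ h := by
      intro x h hh
      have h1 := hP4m x h hh
      have h2 := hP4p x h hh
      have h3 : φ ((x*h - h*star x) + (x*h + h*star x))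
          = φ x*φ h + φ x*φ h := by
        rw [CADD, h1, h2]; abel
      have h4 : (x*h - h*star x) + (x*h + h*star x) = x*h + x*h := by abel
      rw [h4, CADD] at h3
      exact smul_cancel 2 two_ne_zero (by rw [two_smul, two_smul]; exact h3)
    have CMUL : ∀ x y : A, φ (x*y) = φ x*φ y := by
      intro x y
      have hy : y = ((2:ℂ)⁻¹) • (y + star y)
          + Complex.I • (((2:ℂ)⁻¹ * (-Complex.I)) • (y - star y)) := by
        match_scalars <;> (ring_nf; rw [Complex.I_sq]; norm_num)
      have hh_sa : star (((2:ℂ)⁻¹) • (y + star y)) = ((2:ℂ)⁻¹) • (y + star y) := by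
        rw [star_smul, star_add, star_star]
        rw [show star ((2:ℂ)⁻¹) = ((2:ℂ)⁻¹) by simp]
        rw [add_comm]
      have hk_sa : star (((2:ℂ)⁻¹ * (-Complex.I)) • (y - star y))
          = ((2:ℂ)⁻¹ * (-Complex.I)) • (y - star y) := by
        rw [star_smul, star_sub, star_star]
        rw [show star ((2:ℂ)⁻¹ * (-Complex.I)) = -((2:ℂ)⁻¹ * (-Complex.I)) by
          simp [Complex.star_def]]
        rw [neg_smul, smul_sub, smul_sub]
        abel
      have ey : φ y = φ (((2:ℂ)⁻¹) • (y + star y))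
          + Complex.I • φ (((2:ℂ)⁻¹ * (-Complex.I)) • (y - star y)) := by
        conv_lhs => rw [hy]
        rw [CADD, hsmul Complex.I]
      calc φ (x*y) = φ (x*(((2:ℂ)⁻¹) • (y + star y))
            + Complex.I • (x*(((2:ℂ)⁻¹ * (-Complex.I)) • (y - star y)))) := by
            conv_lhs => rw [hy]
            rw [mul_add, mul_smul_comm Complex.I x]
        _ = φ x * φ (((2:ℂ)⁻¹) • (y + star y))
            + Complex.I • (φ x * φ (((2:ℂ)⁻¹ * (-Complex.I)) • (y - star y))) := by
            rw [CADD, hsmul Complex.I, CMULh x _ hh_sa, CMULh x _ hk_sa]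
        _ = φ x * φ y := by rw [ey, mul_add, mul_smul_comm]
    exact ⟨CADD, CMUL, CSTAR⟩
  · -- BACKWARD
    rintro ⟨hadd, hmul, hstar⟩ x
    have h0 : φ 0 = 0 := by
      have := hadd 0 0; simpa using this.symm
    have hneg : ∀ a : A, φ (-a) = - φ a := by
      intro a
      have := hadd a (-a)
      rw [add_neg_cancel, h0] at this
      exact eq_neg_of_add_eq_zero_right this.symm
    have hsub : ∀ a b : A, φ (a - b) = φ a - φ b := by
      intro a b; rw [sub_eq_add_neg, hadd, hneg, sub_eq_add_neg]
    have key : ∀ (k : ℕ) (x : Fin (k+1) → A), φ (pvec k x) = pvec k (fun i => φ (x i)) := by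
      intro k
      induction k with
      | zero => intro x; rfl
      | succ k ih =>
        intro x
        show φ (starLie (pvec k fun i => x i.castSucc) (x (Fin.last (k+1))))
          = starLie (pvec k fun i => φ (x i.castSucc)) (φ (x (Fin.last (k+1))))
        rw [starLie, starLie, hsub, hmul, hmul, hstar, ih]
    exact key (m+1) x
end
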